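/- arXiv:1702.05328 — 5 statements merged into one kernel-verified Lean document; each statement's English description precedes it below -/
import Mathlib

section
/- For every k ≥ 3 and every label type * ∈ {weakest, weak, gen}, VP_k^*(F) = VPe(F): a family of polynomials has polynomially bounded formula size if and only if it is computable by width-k *-ABPs of polynomially bounded size. -/
open MvPolynomial

noncomputable section

/-- A function `ℕ → ℕ` is polynomially bounded. -/
def PolyBounded (f : ℕ → ℕ) : Prop := ∃ c : ℕ, ∀ n, f n ≤ (n + 2) ^ c

/-- A sequence of multivariate polynomials is a family: `f n` uses only variables `x_i`
with `i < v n`, for a polynomially bounded `v`. -/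
def IsPolyFamily {F : Type} [CommSemiring F] (f : ℕ → MvPolynomial ℕ F) : Prop :=
  ∃ v : ℕ → ℕ, PolyBounded v ∧ ∀ n, ∀ i ∈ (f n).vars, i < v n

/-- Arithmetic formulas over `F` in variables `x_i`, `i : ℕ`: expressions built from
variables and constants by binary additions and multiplications. -/
inductive Formula (F : Type) where
  | var : ℕ → Formula F
  | const : F → Formula F
  | add : Formula F → Formula F → Formula F
  | mul : Formula F → Formula F → Formula F

namespace Formula

variable {F : Type} [CommSemiring F]

/-- The polynomial computed by an arithmetic formula. -/
def eval : Formula F → MvPolynomial ℕ F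
  | var i => X i
  | const c => C c
  | add φ ψ => φ.eval + ψ.eval
  | mul φ ψ => φ.eval * ψ.eval

/-- The size of a formula: the number of (binary) operations. -/
def size : Formula F → ℕ
  | var _ => 0
  | const _ => 0
  | add φ ψ => φ.size + ψ.size + 1
  | mul φ ψ => φ.size + ψ.size + 1

/-- The depth of a formula: the length of the longest root-to-leaf path. -/
def depth : Formula F → ℕ
  | var _ => 0
  | const _ => 0
  | add φ ψ => max φ.depth ψ.depth + 1
  | mul φ ψ => max φ.depth ψ.depth + 1

end Formula

/-- A general affine linear form `∑ αᵢ xᵢ + β`, i.e. a polynomial of total degree ≤ 1. -/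
def IsGenForm {F : Type} [CommSemiring F] (p : MvPolynomial ℕ F) : Prop := p.totalDegree ≤ 1

/-- A single variable or a constant. -/
def IsWeakestForm {F : Type} [CommSemiring F] (p : MvPolynomial ℕ F) : Prop :=
  (∃ i, p = X i) ∨ ∃ c, p = C c

/-- A simple affine linear form `α·xᵢ + β`. -/
def IsWeakForm {F : Type} [CommSemiring F] (p : MvPolynomial ℕ F) : Prop :=
  ∃ (α β : F) (i : ℕ), p = C α * X i + C β

/-- An affine linear form in at most two variables, `α·xᵢ + β·xⱼ + γ`. -/
def IsWeakPlusForm {F : Type} [CommSemiring F] (p : MvPolynomial ℕ F) : Prop :=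
  ∃ (α β γ : F) (i j : ℕ), p = C α * X i + C β * X j + C γ

/-- `ABPComputes form k s p`: some width-`k` algebraic branching program of size `s`, all of
whose matrix entries satisfy the predicate `form`, computes the polynomial `p`; that is,
`p = vᵀ · M_s ⋯ M_1 · w` for vectors `v, w ∈ F^k` and matrices `M_i` with entries of
type `form`. -/
def ABPComputes {F : Type} [CommSemiring F] (form : MvPolynomial ℕ F → Prop)
    (k s : ℕ) (p : MvPolynomial ℕ F) : Prop :=
  ∃ (v w : Fin k → F) (M : Fin s → Matrix (Fin k) (Fin k) (MvPolynomial ℕ F)),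
    (∀ (i : Fin s) (a b : Fin k), form (M i a b)) ∧
    p = dotProduct (fun a => C (v a))
          (Matrix.mulVec (List.ofFn M).prod fun a => C (w a))

/-- The class `VP_k^*`: families computable by width-`k` ABPs, with entries of label
type `form`, of polynomially bounded size. -/
def VPkClass (F : Type) [CommSemiring F] (k : ℕ)
    (form : MvPolynomial ℕ F → Prop) : Set (ℕ → MvPolynomial ℕ F) :=
  { f | IsPolyFamily f ∧
        ∃ s : ℕ → ℕ, PolyBounded s ∧ ∀ n, ∃ s' ≤ s n, ABPComputes form k s' (f n) }

/-- The class `VPe`: families computable by arithmetic formulas of polynomially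
bounded size. -/
def VPe (F : Type) [CommSemiring F] : Set (ℕ → MvPolynomial ℕ F) :=
  { f | IsPolyFamily f ∧
        ∃ s : ℕ → ℕ, PolyBounded s ∧ ∀ n, ∃ φ : Formula F, φ.size ≤ s n ∧ φ.eval = f n }

/-- The inclusion `F[x] → F(ε)[x]`. -/
def liftε (F : Type) [Field F] : MvPolynomial ℕ F →+* MvPolynomial ℕ (RatFunc F) :=
  MvPolynomial.map (algebraMap F (RatFunc F))

/-- The inclusion `F[ε][x] → F(ε)[x]`. -/
def liftPolyε (F : Type) [Field F] :
    MvPolynomial ℕ (Polynomial F) →+* MvPolynomial ℕ (RatFunc F) :=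
  MvPolynomial.map (algebraMap (Polynomial F) (RatFunc F))

/-- The approximation closure of a class `Cl` given over `F(ε)`: families `(f_n)` over `F`
for which there are error polynomials `f_{n;1}, …, f_{n;e(n)}` over `F` such that the family
`g_n = f_n + ε f_{n;1} + ⋯ + ε^{e(n)} f_{n;e(n)}` belongs to `Cl` over `F(ε)`. -/
def ApproxClosure (F : Type) [Field F]
    (Cl : Set (ℕ → MvPolynomial ℕ (RatFunc F))) : Set (ℕ → MvPolynomial ℕ F) :=
  { f | IsPolyFamily f ∧ ∃ (e : ℕ → ℕ) (ferr : ℕ → ℕ → MvPolynomial ℕ F),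
      (fun n => liftε F (f n) + ∑ i ∈ Finset.range (e n),
          C ((RatFunc.X : RatFunc F) ^ (i + 1)) * liftε F (ferr n i)) ∈ Cl }

/-- The poly-approximation closure: as `ApproxClosure`, with the error degree `e(n)`
additionally required to be polynomially bounded. -/
def PolyApproxClosure (F : Type) [Field F]
    (Cl : Set (ℕ → MvPolynomial ℕ (RatFunc F))) : Set (ℕ → MvPolynomial ℕ F) :=
  { f | IsPolyFamily f ∧ ∃ e : ℕ → ℕ, PolyBounded e ∧
      ∃ ferr : ℕ → ℕ → MvPolynomial ℕ F,
      (fun n => liftε F (f n) + ∑ i ∈ Finset.range (e n),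
          C ((RatFunc.X : RatFunc F) ^ (i + 1)) * liftε F (ferr n i)) ∈ Cl }

/-- The hypercube sum `∑_{b ∈ {0,1}^p} g(b, x)`: the first `p` variables of `g` are summed
over all Boolean assignments, and variable `p + i` of `g` is renamed to `x_i`. -/
def hcSum {F : Type} [CommSemiring F] (p : ℕ) (g : MvPolynomial ℕ F) : MvPolynomial ℕ F :=
  ∑ b : Fin p → Bool,
    MvPolynomial.aeval
      (fun i : ℕ => if h : i < p then (if b ⟨i, h⟩ then 1 else 0) else X (i - p)) g

/-- The nondeterminism closure `N(Cl)`: families `(f_n)` with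
`f_n(x) = ∑_{b ∈ {0,1}^{p(n)}} g_{q(n)}(b,x)` for some `(g_n) ∈ Cl` and polynomially
bounded `p`, `q`. -/
def Nclosure {F : Type} [CommSemiring F] (Cl : Set (ℕ → MvPolynomial ℕ F)) :
    Set (ℕ → MvPolynomial ℕ F) :=
  { f | IsPolyFamily f ∧ ∃ g ∈ Cl, ∃ p q : ℕ → ℕ, PolyBounded p ∧ PolyBounded q ∧
        ∀ n, f n = hcSum (p n) (g (q n)) }

/-- The matrix `Q(f) = [[f, 1], [1, 0]]`. -/
def Qmat {R : Type} [CommSemiring R] (f : MvPolynomial ℕ R) :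
    Matrix (Fin 2) (Fin 2) (MvPolynomial ℕ R) := !![f, 1; 1, 0]

/-- A primitive Q-matrix: `Q(ℓ)` for a parametrized affine linear form `ℓ`, i.e. an affine
linear form in the `x`-variables with coefficients in `F(ε)`. -/
def IsPrimitiveQ (F : Type) [Field F]
    (M : Matrix (Fin 2) (Fin 2) (MvPolynomial ℕ (RatFunc F))) : Prop :=
  ∃ ℓ : MvPolynomial ℕ (RatFunc F), ℓ.totalDegree ≤ 1 ∧ M = Qmat ℓ

/-- `M` can be written as a product of `n` primitive Q-matrices. -/
def IsProdPrimQ (F : Type) [Field F] (n : ℕ)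
    (M : Matrix (Fin 2) (Fin 2) (MvPolynomial ℕ (RatFunc F))) : Prop :=
  ∃ L : Fin n → Matrix (Fin 2) (Fin 2) (MvPolynomial ℕ (RatFunc F)),
    (∀ i, IsPrimitiveQ F (L i)) ∧ M = (List.ofFn L).prod

/-- `M ∈ Q(f) + O(ε^k)`: `M = Q(f) + ε^k · E` for some matrix `E` with entries
in `F[ε][x]`. -/
def InQErr (F : Type) [Field F] (f : MvPolynomial ℕ F) (k : ℕ)
    (M : Matrix (Fin 2) (Fin 2) (MvPolynomial ℕ (RatFunc F))) : Prop :=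
  ∃ E : Matrix (Fin 2) (Fin 2) (MvPolynomial ℕ (Polynomial F)),
    M = Qmat (liftε F f) +
      (C ((RatFunc.X : RatFunc F) ^ k) : MvPolynomial ℕ (RatFunc F)) • E.map (liftPolyε F)

/-- `M` has entries in `F[ε][x]` and error degree at most `e`: every entry has degree at
most `e` in `ε`. -/
def ErrDegLE (F : Type) [Field F]
    (M : Matrix (Fin 2) (Fin 2) (MvPolynomial ℕ (RatFunc F))) (e : ℕ) : Prop :=
  ∃ E : Matrix (Fin 2) (Fin 2) (MvPolynomial ℕ (Polynomial F)),
    M = E.map (liftPolyε F) ∧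
    ∀ (a b : Fin 2) (m : ℕ →₀ ℕ), (MvPolynomial.coeff m (E a b)).natDegree ≤ e

/-- The generalized Fibonacci polynomials: `F_0 = 1`, `F_1 = x_1`,
`F_n = x_n · F_{n-1} + F_{n-2}` (variables indexed from 0). -/
def fibPoly (R : Type) [CommSemiring R] : ℕ → MvPolynomial ℕ R
  | 0 => 1
  | 1 => X 0
  | n + 2 => X (n + 1) * fibPoly R (n + 1) + fibPoly R n

/-- `f` is a degeneration of the Fibonacci polynomial `F_m` witnessing border Fibonacci
complexity at most `m`: there are parametrized affine linear forms `ℓ_1, …, ℓ_m` with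
`F_m(ℓ_1, …, ℓ_m) = f + ε·g` for some `g ∈ F[ε][x]`. -/
def FibBorderProj (F : Type) [Field F] (f : MvPolynomial ℕ F) (m : ℕ) : Prop :=
  ∃ ℓ : ℕ → MvPolynomial ℕ (RatFunc F),
    (∀ i, (ℓ i).totalDegree ≤ 1) ∧
    ∃ g : MvPolynomial ℕ (Polynomial F),
      MvPolynomial.aeval ℓ (fibPoly (RatFunc F) m) =
        liftε F f + C (RatFunc.X : RatFunc F) * liftPolyε F g

section AuxPoly

lemma polyBounded_mono {f g : ℕ → ℕ} (h : ∀ n, f n ≤ g n) (hg : PolyBounded g) :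
    PolyBounded f := by
  obtain ⟨c, hc⟩ := hg
  exact ⟨c, fun n => (h n).trans (hc n)⟩

lemma polyBounded_const (a : ℕ) : PolyBounded (fun _ => a) := by
  refine ⟨a, fun n => ?_⟩
  calc a ≤ 2 ^ a := (Nat.lt_two_pow_self (n := a)).le
    _ ≤ (n + 2) ^ a := Nat.pow_le_pow_left (by omega) a

lemma polyBounded_id : PolyBounded (fun n => n) := by
  refine ⟨1, fun n => ?_⟩
  show n ≤ (n + 2) ^ 1
  rw [pow_one]
  omega

lemma polyBounded_mul {f g : ℕ → ℕ} (hf : PolyBounded f) (hg : PolyBounded g) :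
    PolyBounded (fun n => f n * g n) := by
  obtain ⟨c, hc⟩ := hf; obtain ⟨d, hd⟩ := hg
  refine ⟨c + d, fun n => ?_⟩
  rw [pow_add]
  exact Nat.mul_le_mul (hc n) (hd n)

lemma polyBounded_add {f g : ℕ → ℕ} (hf : PolyBounded f) (hg : PolyBounded g) :
    PolyBounded (fun n => f n + g n) := by
  obtain ⟨c, hc⟩ := hf; obtain ⟨d, hd⟩ := hg
  refine ⟨c + d + 1, fun n => ?_⟩
  have h1 : f n ≤ (n + 2) ^ (c + d) :=
    (hc n).trans (Nat.pow_le_pow_right (by omega) (by omega))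
  have h2 : g n ≤ (n + 2) ^ (c + d) :=
    (hd n).trans (Nat.pow_le_pow_right (by omega) (by omega))
  calc f n + g n ≤ 2 * (n + 2) ^ (c + d) := by omega
    _ ≤ (n + 2) * (n + 2) ^ (c + d) := Nat.mul_le_mul_right _ (by omega)
    _ = (n + 2) ^ (c + d + 1) := by ring

lemma polyBounded_pow {f : ℕ → ℕ} (hf : PolyBounded f) (d : ℕ) :
    PolyBounded (fun n => f n ^ d) := by
  obtain ⟨c, hc⟩ := hf
  refine ⟨c * d, fun n => ?_⟩
  calc f n ^ d ≤ ((n + 2) ^ c) ^ d := Nat.pow_le_pow_left (hc n) d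
    _ = (n + 2) ^ (c * d) := by rw [← pow_mul]

lemma two_pow_clog_le (m : ℕ) : 2 ^ Nat.clog 2 m ≤ 2 * m + 1 := by
  rcases Nat.lt_or_ge m 2 with h | h
  · interval_cases m
    · simp [Nat.clog_zero_right]
    · simp [Nat.clog_one_right]
  · have h1 : 2 ^ (Nat.clog 2 m - 1) < m := Nat.pow_pred_clog_lt_self (by norm_num) (by omega)
    have h2 : 1 ≤ Nat.clog 2 m := Nat.clog_pos (by norm_num) h
    have h3 : 2 ^ Nat.clog 2 m = 2 * 2 ^ (Nat.clog 2 m - 1) := by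
      rw [← pow_succ']
      congr 1
      omega
    omega

end AuxPoly

section PartA

namespace ABPtoFormula

open Formula

variable {F : Type} [CommSemiring F]

/-- Sum of a list of formulas. -/
def fsum : List (Formula F) → Formula F
  | [] => .const 0
  | a :: l => .add a (fsum l)

lemma eval_fsum (L : List (Formula F)) : (fsum L).eval = (L.map Formula.eval).sum := by
  induction L with
  | nil => simp [fsum, Formula.eval]
  | cons a l ih => simp [fsum, Formula.eval, ih]

lemma size_fsum (L : List (Formula F)) :
    (fsum L).size ≤ (L.map Formula.size).sum + L.length := by
  induction L with
  | nil => simp [fsum, Formula.size]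
  | cons a l ih => simp only [fsum, Formula.size, List.map_cons, List.sum_cons,
      List.length_cons]; omega

variable {k : ℕ}

/-- Formula-level matrix multiplication. -/
def fmulMat (A B : Fin k → Fin k → Formula F) : Fin k → Fin k → Formula F :=
  fun a b => fsum (List.ofFn fun j => .mul (A a j) (B j b))

/-- Identity matrix of formulas. -/
def idF : Fin k → Fin k → Formula F :=
  fun a b => .const (if a = b then 1 else 0)

/-- Evaluation of a matrix of formulas. -/
def evalM (A : Fin k → Fin k → Formula F) : Matrix (Fin k) (Fin k) (MvPolynomial ℕ F) :=
  Matrix.of fun a b => (A a b).eval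

lemma evalM_idF : evalM (idF : Fin k → Fin k → Formula F) = 1 := by
  ext a b
  simp only [evalM, idF, Matrix.of_apply, Formula.eval, Matrix.one_apply]
  split <;> simp

lemma evalM_fmulMat (A B : Fin k → Fin k → Formula F) :
    evalM (fmulMat A B) = evalM A * evalM B := by
  ext a b
  simp [evalM, fmulMat, eval_fsum, Matrix.mul_apply, List.map_ofFn, List.sum_ofFn,
    Formula.eval, Function.comp]

/-- Balanced product of `2^d` formula matrices starting at block `i`. -/
def pprod (f : ℕ → Fin k → Fin k → Formula F) : ℕ → ℕ → Fin k → Fin k → Formula F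
  | 0, i => f i
  | d+1, i => fmulMat (pprod f d (2*i)) (pprod f d (2*i+1))

lemma evalM_pprod (f : ℕ → Fin k → Fin k → Formula F) :
    ∀ d i, evalM (pprod f d i) =
      ((List.range (2^d)).map (fun j => evalM (f (2^d * i + j)))).prod := by
  intro d
  induction d with
  | zero =>
    intro i
    rw [show (2:ℕ)^0 = 1 from rfl, show List.range 1 = [0] from rfl]
    simp [pprod]
  | succ d ih =>
    intro i
    have hsplit : (2:ℕ) ^ (d+1) = 2^d + 2^d := by ring
    rw [pprod, evalM_fmulMat, ih, ih, hsplit, List.range_add, List.map_append,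
      List.prod_append, List.map_map]
    congr 1
    · apply congrArg
      apply List.map_congr_left
      intro j _
      congr 2
      ring
    · apply congrArg
      apply List.map_congr_left
      intro j _
      simp only [Function.comp]
      congr 2
      ring

lemma size_pprod (hk : 1 ≤ k) {S : ℕ} (f : ℕ → Fin k → Fin k → Formula F)
    (hf : ∀ j a b, (f j a b).size + 2 ≤ S) :
    ∀ d i a b, (pprod f d i a b).size + 2 ≤ (2*k)^d * S := by
  intro d
  induction d with
  | zero => intro i a b; simpa [pprod] using hf i a b
  | succ d ih =>
    intro i a b
    have h1 : (pprod f (d+1) i a b).size ≤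
        (∑ j : Fin k, ((pprod f d (2*i) a j).size + (pprod f d (2*i+1) j b).size + 1)) + k := by
      show (fsum _).size ≤ _
      refine (size_fsum _).trans ?_
      simp [List.map_ofFn, List.sum_ofFn, Function.comp, Formula.size]
    have h2 : (∑ j : Fin k, ((pprod f d (2*i) a j).size + (pprod f d (2*i+1) j b).size + 1))
        ≤ ∑ _j : Fin k, (2 * ((2*k)^d * S) - 3) := by
      apply Finset.sum_le_sum
      intro j _
      have := ih (2*i) a j
      have := ih (2*i+1) j b
      omega
    have h3 : ∑ _j : Fin k, (2 * ((2*k)^d * S) - 3) = k * (2 * ((2*k)^d * S) - 3) := by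
      rw [Finset.sum_const, Finset.card_univ, Fintype.card_fin, smul_eq_mul]
    have hT : 2 ≤ (2*k)^d * S := by
      have := hf 0 a b
      have h4 : 1 ≤ (2*k)^d := Nat.one_le_pow _ _ (by omega)
      have : 2 ≤ S := by omega
      calc 2 ≤ S := this
        _ = 1 * S := (one_mul S).symm
        _ ≤ (2*k)^d * S := Nat.mul_le_mul_right _ h4
    rw [h3] at h2
    have hmul : k * (2 * ((2*k)^d * S) - 3) + k * 3 = k * (2 * ((2*k)^d * S)) := by
      rw [← Nat.mul_add]
      congr 1
      omega
    have h5 : (2*k)^(d+1) * S = k * (2 * ((2*k)^d * S)) := by ring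
    rw [h5]
    omega

end ABPtoFormula

end PartA
section PartA2

namespace ABPtoFormula

open Formula

variable {F : Type} [CommSemiring F]

lemma coeff_single_zero_of_not_mem_vars {ℓ : MvPolynomial ℕ F} {i : ℕ}
    (h : i ∉ ℓ.vars) : coeff (Finsupp.single i 1) ℓ = 0 := by
  by_contra hne
  apply h
  rw [MvPolynomial.mem_vars]
  exact ⟨Finsupp.single i 1, MvPolynomial.mem_support_iff.mpr hne, by
    rw [Finsupp.mem_support_iff, Finsupp.single_eq_same]; exact one_ne_zero⟩

lemma support_affine {ℓ : MvPolynomial ℕ F} (h : ℓ.totalDegree ≤ 1)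
    {m : ℕ →₀ ℕ} (hm : m ∈ ℓ.support) : m = 0 ∨ ∃ i, m = Finsupp.single i 1 := by
  have hs : (m.sum fun _ e => e) ≤ 1 := (MvPolynomial.le_totalDegree hm).trans h
  by_cases h0 : m = 0
  · exact Or.inl h0
  · right
    have hcard : 1 ≤ m.support.card := by
      rcases Finset.eq_empty_or_nonempty m.support with he | hne
      · exact absurd (Finsupp.support_eq_empty.mp he) h0
      · exact Finset.card_pos.mpr hne
    have hsum : m.support.card ≤ m.sum fun _ e => e := by
      rw [Finsupp.sum]
      calc m.support.card = ∑ _i ∈ m.support, 1 := by simp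
        _ ≤ ∑ i ∈ m.support, m i :=
          Finset.sum_le_sum (fun i hi =>
            Nat.one_le_iff_ne_zero.mpr (Finsupp.mem_support_iff.mp hi))
    have hone : m.support.card = 1 := le_antisymm (hsum.trans hs) hcard
    obtain ⟨a, b, hb, rfl⟩ := Finsupp.card_support_eq_one'.mp hone
    have hsb : (Finsupp.single a b).sum (fun _ e => e) = b :=
      Finsupp.sum_single_index rfl
    rw [hsb] at hs
    have : b = 1 := by omega
    exact ⟨a, by rw [this]⟩

lemma affine_decomp {ℓ : MvPolynomial ℕ F} (h : ℓ.totalDegree ≤ 1) :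
    ℓ = C (constantCoeff ℓ) +
      ∑ i ∈ ℓ.vars, C (coeff (Finsupp.single i 1) ℓ) * X i := by
  classical
  apply MvPolynomial.ext
  intro m
  rw [MvPolynomial.coeff_add, MvPolynomial.coeff_sum]
  have hterm : ∀ i : ℕ, coeff m (C (coeff (Finsupp.single i 1) ℓ) * X i)
      = if Finsupp.single i 1 = m then coeff (Finsupp.single i 1) ℓ else 0 := by
    intro i
    rw [MvPolynomial.coeff_C_mul, MvPolynomial.coeff_X', mul_ite, mul_one, mul_zero]
  rw [Finset.sum_congr rfl (fun i _ => hterm i)]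
  by_cases h0 : m = 0
  · subst h0
    rw [MvPolynomial.coeff_C, if_pos rfl]
    have : ∀ i ∈ ℓ.vars, (if Finsupp.single i 1 = 0 then coeff (Finsupp.single i 1) ℓ else 0)
        = 0 := by
      intro i _
      rw [if_neg]
      intro hcon
      exact one_ne_zero (Finsupp.single_eq_zero.mp hcon)
    rw [Finset.sum_congr rfl this, Finset.sum_const_zero, add_zero,
      MvPolynomial.constantCoeff_eq]
  · rw [MvPolynomial.coeff_C, if_neg (fun hcon => h0 hcon.symm), zero_add]
    by_cases h1 : ∃ j, m = Finsupp.single j 1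
    · obtain ⟨j, rfl⟩ := h1
      have hcond : ∀ i : ℕ, (Finsupp.single i 1 = Finsupp.single j 1) = (i = j) := by
        intro i
        apply propext
        exact Finsupp.single_left_inj one_ne_zero
      simp only [hcond]
      rw [Finset.sum_ite_eq' ℓ.vars j]
      by_cases hj : j ∈ ℓ.vars
      · rw [if_pos hj]
      · rw [if_neg hj, coeff_single_zero_of_not_mem_vars hj]
    · have hl : coeff m ℓ = 0 := by
        by_contra hne
        rcases support_affine h (MvPolynomial.mem_support_iff.mpr hne) with h' | ⟨i, h'⟩
        · exact h0 h'
        · exact h1 ⟨i, h'⟩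
      rw [hl]
      symm
      apply Finset.sum_eq_zero
      intro i _
      rw [if_neg]
      intro hcon
      exact h1 ⟨i, hcon.symm⟩

/-- Substitution killing all variables with index `≥ v`. -/
def trunc (F : Type) [CommSemiring F] (v : ℕ) : ℕ → MvPolynomial ℕ F :=
  fun i => if i < v then X i else 0

lemma sigma_fix {v : ℕ} {p : MvPolynomial ℕ F} (hv : ∀ i ∈ p.vars, i < v) :
    MvPolynomial.aeval (trunc F v) p = p := by
  conv_lhs => rw [p.as_sum]
  conv_rhs => rw [p.as_sum]
  rw [map_sum]
  apply Finset.sum_congr rfl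
  intro m hm
  rw [MvPolynomial.aeval_monomial, MvPolynomial.algebraMap_eq, MvPolynomial.monomial_eq]
  congr 1
  apply Finsupp.prod_congr
  intro i hi
  rw [trunc, if_pos (hv i ((MvPolynomial.mem_vars i).mpr ⟨m, hm, hi⟩))]

lemma sigma_entry {ℓ : MvPolynomial ℕ F} (h : ℓ.totalDegree ≤ 1) (v : ℕ) :
    MvPolynomial.aeval (trunc F v) ℓ = C (constantCoeff ℓ) +
      ∑ i ∈ Finset.range v, C (coeff (Finsupp.single i 1) ℓ) * X i := by
  classical
  conv_lhs => rw [affine_decomp h]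
  rw [map_add, map_sum]
  congr 1
  · rw [MvPolynomial.aeval_C, MvPolynomial.algebraMap_eq]
  · have hterm : ∀ i : ℕ, MvPolynomial.aeval (trunc F v)
        (C (coeff (Finsupp.single i 1) ℓ) * X i)
        = if i < v then C (coeff (Finsupp.single i 1) ℓ) * X i else 0 := by
      intro i
      rw [map_mul, MvPolynomial.aeval_C, MvPolynomial.algebraMap_eq, MvPolynomial.aeval_X,
        trunc]
      split <;> simp
    rw [Finset.sum_congr rfl (fun i _ => hterm i), ← Finset.sum_filter]
    apply Finset.sum_subset
    · intro i hi
      rw [Finset.mem_filter] at hi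
      exact Finset.mem_range.mpr hi.2
    · intro i hi hni
      have : i ∉ ℓ.vars := by
        intro hc
        exact hni (Finset.mem_filter.mpr ⟨hc, Finset.mem_range.mp hi⟩)
      rw [coeff_single_zero_of_not_mem_vars this, MvPolynomial.C_0, zero_mul]

/-- Formula for a canonical affine form. -/
def affF (c : F) (a : ℕ → F) (v : ℕ) : Formula F :=
  .add (.const c) (fsum (List.ofFn (fun i : Fin v => .mul (.const (a i)) (.var i))))

lemma eval_affF (c : F) (a : ℕ → F) (v : ℕ) :
    (affF c a v).eval = C c + ∑ i ∈ Finset.range v, C (a i) * X i := by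
  simp only [affF, Formula.eval, eval_fsum, List.map_ofFn, Function.comp_def]
  congr 1
  rw [List.sum_ofFn, ← Fin.sum_univ_eq_sum_range]

lemma size_affF (c : F) (a : ℕ → F) (v : ℕ) : (affF c a v).size + 2 ≤ 2*v + 3 := by
  have h := size_fsum (List.ofFn (fun i : Fin v =>
    Formula.mul (Formula.const (a i)) (Formula.var (i:ℕ))))
  simp only [affF, Formula.size]
  simp only [List.map_ofFn, List.sum_ofFn, List.length_ofFn, Function.comp] at h
  have h2 : ∑ i : Fin v, (Formula.mul (Formula.const (a i)) (Formula.var (i:ℕ))).size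
      = ∑ _i : Fin v, 1 := by
    apply Finset.sum_congr rfl
    intro i _
    rfl
  rw [h2, Finset.sum_const, Finset.card_univ, Fintype.card_fin, smul_eq_mul, mul_one] at h
  have : (Formula.const c).size = 0 := rfl
  omega

end ABPtoFormula

end PartA2
section PartA3

namespace ABPtoFormula

open Formula

variable {F : Type} [CommSemiring F]

lemma sigma_dot {k : ℕ} (τ : MvPolynomial ℕ F →ₐ[F] MvPolynomial ℕ F)
    (x y : Fin k → F) (Q : Matrix (Fin k) (Fin k) (MvPolynomial ℕ F)) :
    τ (dotProduct (fun a => C (x a)) (Matrix.mulVec Q fun a => C (y a)))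
      = dotProduct (fun a => C (x a)) (Matrix.mulVec (Q.map τ) fun a => C (y a)) := by
  simp only [dotProduct, Matrix.mulVec, map_sum, map_mul, Matrix.map_apply,
    ← MvPolynomial.algebraMap_eq, AlgHom.commutes]

lemma map_ofFn_prod {k s' : ℕ} (τ : MvPolynomial ℕ F →+* MvPolynomial ℕ F)
    (M : Fin s' → Matrix (Fin k) (Fin k) (MvPolynomial ℕ F)) :
    ((List.ofFn M).prod).map τ = (List.ofFn fun i : Fin s' => (M i).map τ).prod := by
  have h := map_list_prod (τ.mapMatrix (m := Fin k)) (List.ofFn M)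
  simp only [RingHom.mapMatrix_apply] at h
  rw [h, List.map_ofFn]
  rfl

lemma partA {k : ℕ} (hk : 1 ≤ k) {p : MvPolynomial ℕ F} {s' v : ℕ}
    (hvars : ∀ i ∈ p.vars, i < v) (h : ABPComputes IsGenForm k s' p) :
    ∃ φ : Formula F, φ.eval = p ∧
      φ.size ≤ k^2 * ((2*k)^(Nat.clog 2 s') * (2*v + 3)) + 2*k := by
  classical
  obtain ⟨vv, ww, M, hform, hp⟩ := h
  set τ := (MvPolynomial.aeval (R := F) (trunc F v)) with hτ
  set d := Nat.clog 2 s' with hd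
  have hsd : s' ≤ 2^d := Nat.le_pow_clog (by norm_num) _
  set Mf : ℕ → Fin k → Fin k → Formula F := fun j a b =>
    if h : j < s' then affF (constantCoeff (M ⟨j,h⟩ a b))
       (fun i => coeff (Finsupp.single i 1) (M ⟨j,h⟩ a b)) v
    else idF a b with hMf
  set N : ℕ → Matrix (Fin k) (Fin k) (MvPolynomial ℕ F) := fun j =>
    if h : j < s' then ((M ⟨j,h⟩).map τ) else 1 with hN
  have hevalN : ∀ j, evalM (Mf j) = N j := by
    intro j
    by_cases hj : j < s'
    · ext a b
      simp only [hMf, hN, dif_pos hj, evalM, Matrix.of_apply, Matrix.map_apply]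
      rw [eval_affF, ← sigma_entry (hform ⟨j,hj⟩ a b) v]
    · have h1 : Mf j = idF := by
        funext a b
        simp only [hMf, dif_neg hj]
      rw [h1, evalM_idF]
      simp only [hN, dif_neg hj]
  set P := pprod Mf d 0 with hPdef
  have hP : evalM P = (List.ofFn (fun i : Fin s' => (M i).map τ)).prod := by
    rw [hPdef, evalM_pprod]
    have h1 : (List.range (2^d)).map (fun j => evalM (Mf (2^d * 0 + j)))
        = (List.range (2^d)).map N := by
      apply List.map_congr_left
      intro j _
      rw [show 2^d*0 + j = j by ring, hevalN]
    rw [h1]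
    obtain ⟨r, hr⟩ : ∃ r, 2^d = s' + r := ⟨2^d - s', by omega⟩
    rw [hr, List.range_add, List.map_append, List.prod_append, List.map_map]
    have h2 : ((List.range r).map (N ∘ (s' + ·))).prod = 1 := by
      apply List.prod_eq_one
      intro x hx
      simp only [List.mem_map] at hx
      obtain ⟨y, hy, rfl⟩ := hx
      simp only [Function.comp, hN]
      rw [dif_neg (by omega)]
    rw [h2, mul_one]
    have h3 : (List.range s').map N = List.ofFn (fun i : Fin s' => (M i).map τ) := by
      apply List.ext_getElem
      · simp
      · intro j hj1 hj2
        simp only [List.getElem_map, List.getElem_range, List.getElem_ofFn]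
        have hjs : j < s' := by simpa using hj1
        simp only [hN, dif_pos hjs]
    rw [h3]
  have key : p = dotProduct (fun a => C (vv a))
      (Matrix.mulVec ((List.ofFn fun i : Fin s' => (M i).map τ).prod) fun a => C (ww a)) := by
    have hσp : τ p = p := sigma_fix hvars
    conv_lhs => rw [← hσp, hp]
    rw [sigma_dot]
    rw [show ((List.ofFn M).prod).map τ
        = ((List.ofFn M).prod).map (τ.toRingHom : MvPolynomial ℕ F →+* MvPolynomial ℕ F)
        from rfl, map_ofFn_prod]
    rfl
  have hsizes : ∀ j a b, (Mf j a b).size + 2 ≤ 2*v + 3 := by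
    intro j a b
    by_cases hj : j < s'
    · simp only [hMf, dif_pos hj]
      exact size_affF _ _ _
    · simp only [hMf, dif_neg hj]
      have : (idF (F := F) a b).size = 0 := rfl
      omega
  have hsize : ∀ a b, (P a b).size + 2 ≤ (2*k)^d * (2*v+3) :=
    fun a b => size_pprod hk Mf hsizes d 0 a b
  set T := (2*k)^d * (2*v+3) with hT
  have hT1 : 1 ≤ T := by
    have : 1 ≤ (2*k)^d := Nat.one_le_pow _ _ (by omega)
    calc 1 = 1 * 1 := by ring
      _ ≤ (2*k)^d * (2*v+3) := Nat.mul_le_mul this (by omega)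
  set Φ := fsum (List.ofFn fun a : Fin k => Formula.mul (.const (vv a))
    (fsum (List.ofFn fun b : Fin k => Formula.mul (P a b) (.const (ww b))))) with hΦ
  refine ⟨Φ, ?_, ?_⟩
  · rw [key, hΦ]
    rw [eval_fsum, List.map_ofFn, List.sum_ofFn]
    simp only [Function.comp_def, Formula.eval, eval_fsum, List.map_ofFn, List.sum_ofFn]
    simp only [dotProduct, Matrix.mulVec]
    apply Finset.sum_congr rfl
    intro a _
    congr 1
    apply Finset.sum_congr rfl
    intro b _
    congr 1
    have : (P a b).eval = evalM P a b := rfl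
    rw [this, hP]
  · have hinner : ∀ a : Fin k,
        (fsum (List.ofFn fun b : Fin k => Formula.mul (P a b) (.const (ww b)))).size
          ≤ k * T := by
      intro a
      refine (size_fsum _).trans ?_
      rw [List.map_ofFn, List.sum_ofFn, List.length_ofFn]
      have h1 : ∑ b : Fin k, ((Formula.mul (P a b) (.const (ww b))).size)
          ≤ ∑ _b : Fin k, (T - 1) := by
        apply Finset.sum_le_sum
        intro b _
        have := hsize a b
        have : (Formula.mul (P a b) (.const (ww b))).size = (P a b).size + 0 + 1 := rfl
        omega
      rw [Finset.sum_const, Finset.card_univ, Fintype.card_fin, smul_eq_mul] at h1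
      have h2 : k * (T-1) + k * 1 = k * T := by
        rw [← Nat.mul_add]
        congr 1
        omega
      simp only [Function.comp_def] at h1 ⊢
      omega
    rw [hΦ]
    refine (size_fsum _).trans ?_
    rw [List.map_ofFn, List.sum_ofFn, List.length_ofFn]
    have h1 : ∑ a : Fin k, ((Formula.mul (.const (vv a))
        (fsum (List.ofFn fun b : Fin k => Formula.mul (P a b) (.const (ww b))))).size)
        ≤ ∑ _a : Fin k, (k * T + 1) := by
      apply Finset.sum_le_sum
      intro a _
      have := hinner a
      have heq : (Formula.mul (.const (vv a))
          (fsum (List.ofFn fun b : Fin k => Formula.mul (P a b) (.const (ww b))))).size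
          = 0 + (fsum (List.ofFn fun b : Fin k => Formula.mul (P a b) (.const (ww b)))).size
            + 1 := rfl
      omega
    rw [Finset.sum_const, Finset.card_univ, Fintype.card_fin, smul_eq_mul] at h1
    have h2 : k * (k * T + 1) + k = k^2 * T + 2*k := by ring
    simp only [Function.comp_def] at h1 ⊢
    omega

end ABPtoFormula

end PartA3
section PartA4

lemma vpk_gen_subset_vpe (F : Type) [CommSemiring F] (k : ℕ) (hk : 1 ≤ k) :
    VPkClass F k IsGenForm ⊆ VPe F := by
  rintro f ⟨hfam, s, hs, habp⟩
  refine ⟨hfam, ?_⟩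
  obtain ⟨v, hv, hvars⟩ := hfam
  refine ⟨fun n => k^2 * ((2*(s n)+1)^(k+1) * (2*(v n) + 3)) + 2*k, ?_, ?_⟩
  · apply polyBounded_add
    · apply polyBounded_mul (polyBounded_const _)
      apply polyBounded_mul
      · apply polyBounded_pow
        exact polyBounded_add (polyBounded_mul (polyBounded_const 2) hs) (polyBounded_const 1)
      · exact polyBounded_add (polyBounded_mul (polyBounded_const 2) hv) (polyBounded_const 3)
    · exact polyBounded_const _
  · intro n
    obtain ⟨s', hs', habp'⟩ := habp n
    obtain ⟨φ, hφeval, hφsize⟩ := ABPtoFormula.partA hk (hvars n) habp'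
    refine ⟨φ, ?_, hφeval⟩
    refine hφsize.trans ?_
    have h1 : Nat.clog 2 s' ≤ Nat.clog 2 (s n) := Nat.clog_mono_right _ hs'
    have h2 : (2*k) ≤ 2^(k+1) := by
      have hkp : k < 2^k := Nat.lt_two_pow_self (n := k)
      calc 2*k ≤ 2*2^k := by omega
        _ = 2^(k+1) := (pow_succ' 2 k).symm
    have h3 : (2*k)^(Nat.clog 2 s') ≤ (2^(k+1))^(Nat.clog 2 (s n)) :=
      (Nat.pow_le_pow_left h2 _).trans (Nat.pow_le_pow_right (Nat.one_le_two_pow) h1)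
    have h4 : (2^(k+1))^(Nat.clog 2 (s n)) = (2^(Nat.clog 2 (s n)))^(k+1) := by
      rw [← pow_mul, ← pow_mul, mul_comm]
    have h5 : (2:ℕ)^(Nat.clog 2 (s n)) ≤ 2*(s n)+1 := two_pow_clog_le _
    have h6 : (2*k)^(Nat.clog 2 s') ≤ (2*(s n)+1)^(k+1) := by
      refine h3.trans ?_
      rw [h4]
      exact Nat.pow_le_pow_left h5 _
    have := Nat.mul_le_mul_left (k^2) (Nat.mul_le_mul_right (2*(v n)+3) h6)
    show _ ≤ k^2 * ((2*(s n)+1)^(k+1) * (2*(v n) + 3)) + 2*k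
    omega

end PartA4
section PartB1

namespace FormulaDepth

open Formula

variable {F : Type} [CommSemiring F]

lemma depth_le_size (φ : Formula F) : φ.depth ≤ φ.size := by
  induction φ with
  | var i => exact le_refl _
  | const c => exact le_refl _
  | add φ ψ ihφ ihψ =>
    simp only [Formula.depth, Formula.size]
    omega
  | mul φ ψ ihφ ihψ =>
    simp only [Formula.depth, Formula.size]
    omega

/-- Brent's decomposition: a separator subformula `g` with `φ = A·g + B`. -/
lemma decomp (φ : Formula F) : ∀ t : ℕ, t < φ.size →
    ∃ g A B : Formula F,
      A.eval * g.eval + B.eval = φ.eval ∧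
      g.size ≤ t ∧ t ≤ 2 * g.size ∧
      A.size + g.size ≤ φ.size ∧ B.size + g.size ≤ φ.size := by
  induction φ with
  | var i => intro t ht; simp [Formula.size] at ht
  | const c => intro t ht; simp [Formula.size] at ht
  | add φ₁ φ₂ ih₁ ih₂ =>
    intro t ht
    simp only [Formula.size] at ht
    rcases le_total φ₂.size φ₁.size with hle | hle
    · by_cases hstop : φ₁.size ≤ t
      · refine ⟨φ₁, .const 1, φ₂, ?_, hstop, by omega, by simp only [Formula.size]; omega,
          by simp only [Formula.size]; omega⟩
        simp only [Formula.eval, map_one, map_zero]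
        ring
      · obtain ⟨g, A, B, hev, h1, h2, h3, h4⟩ := ih₁ t (by omega)
        refine ⟨g, A, .add B φ₂, ?_, h1, h2, by simp only [Formula.size]; omega,
          by simp only [Formula.size]; omega⟩
        simp only [Formula.eval, ← hev]
        ring
    · by_cases hstop : φ₂.size ≤ t
      · refine ⟨φ₂, .const 1, φ₁, ?_, hstop, by omega, by simp only [Formula.size]; omega,
          by simp only [Formula.size]; omega⟩
        simp only [Formula.eval, map_one, map_zero]
        ring
      · obtain ⟨g, A, B, hev, h1, h2, h3, h4⟩ := ih₂ t (by omega)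
        refine ⟨g, A, .add B φ₁, ?_, h1, h2, by simp only [Formula.size]; omega,
          by simp only [Formula.size]; omega⟩
        simp only [Formula.eval, ← hev]
        ring
  | mul φ₁ φ₂ ih₁ ih₂ =>
    intro t ht
    simp only [Formula.size] at ht
    rcases le_total φ₂.size φ₁.size with hle | hle
    · by_cases hstop : φ₁.size ≤ t
      · refine ⟨φ₁, φ₂, .const 0, ?_, hstop, by omega, by simp only [Formula.size]; omega,
          by simp only [Formula.size]; omega⟩
        simp only [Formula.eval, map_one, map_zero]
        ring
      · obtain ⟨g, A, B, hev, h1, h2, h3, h4⟩ := ih₁ t (by omega)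
        refine ⟨g, .mul A φ₂, .mul B φ₂, ?_, h1, h2, by simp only [Formula.size]; omega,
          by simp only [Formula.size]; omega⟩
        simp only [Formula.eval, ← hev]
        ring
    · by_cases hstop : φ₂.size ≤ t
      · refine ⟨φ₂, φ₁, .const 0, ?_, hstop, by omega, by simp only [Formula.size]; omega,
          by simp only [Formula.size]; omega⟩
        simp only [Formula.eval, map_one, map_zero]
        ring
      · obtain ⟨g, A, B, hev, h1, h2, h3, h4⟩ := ih₂ t (by omega)
        refine ⟨g, .mul A φ₁, .mul B φ₁, ?_, h1, h2, by simp only [Formula.size]; omega,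
          by simp only [Formula.size]; omega⟩
        simp only [Formula.eval, ← hev]
        ring

/-- Brent's depth reduction. -/
lemma brent : ∀ (s : ℕ) (φ : Formula F), φ.size ≤ s →
    ∃ ψ : Formula F, ψ.eval = φ.eval ∧ 2 ^ ψ.depth ≤ (s+1)^16 := by
  intro s
  induction s using Nat.strong_induction_on with
  | _ s ih =>
    intro φ hφ
    by_cases hs : s ≤ 10
    · refine ⟨φ, rfl, ?_⟩
      have h1 : φ.depth ≤ s := (depth_le_size φ).trans hφ
      rcases Nat.eq_zero_or_pos s with h0 | h0
      · subst h0
        have : φ.depth = 0 := by omega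
        rw [this]
        simp
      · calc 2^φ.depth ≤ 2^10 := Nat.pow_le_pow_right (by norm_num) (by omega)
          _ ≤ 2^16 := by norm_num
          _ = (1+1)^16 := by norm_num
          _ ≤ (s+1)^16 := Nat.pow_le_pow_left (by omega) _
    · push_neg at hs
      by_cases heq : φ.size < s
      · obtain ⟨ψ, h1, h2⟩ := ih φ.size (by omega) φ (le_refl _)
        exact ⟨ψ, h1, h2.trans (Nat.pow_le_pow_left (by omega) _)⟩
      · have hsize : φ.size = s := by omega
        set t := (2*s)/3 with hts
        obtain ⟨g, A, B, hev, h1, h2, h3, h4⟩ := decomp φ t (by omega)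
        set m := (2*s)/3 + 2 with hm
        have hms : m < s := by omega
        have hgm : g.size ≤ m := by omega
        have hAm : A.size ≤ m := by omega
        have hBm : B.size ≤ m := by omega
        obtain ⟨ψg, hg1, hg2⟩ := ih m hms g hgm
        obtain ⟨ψA, hA1, hA2⟩ := ih m hms A hAm
        obtain ⟨ψB, hB1, hB2⟩ := ih m hms B hBm
        refine ⟨.add (.mul ψA ψg) ψB, ?_, ?_⟩
        · simp only [Formula.eval, hg1, hA1, hB1, hev]
        · have hd : (Formula.add (.mul ψA ψg) ψB).depth
              ≤ max (max ψA.depth ψg.depth) ψB.depth + 2 := by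
            simp only [Formula.depth]
            have := le_max_left ψA.depth ψg.depth
            have := le_max_right ψA.depth ψg.depth
            have h5 : max ψA.depth ψg.depth + 1 ≤ max (max ψA.depth ψg.depth) ψB.depth + 1 :=
              Nat.add_le_add_right (le_max_left _ _) 1
            have h6 : ψB.depth ≤ max (max ψA.depth ψg.depth) ψB.depth :=
              le_max_right _ _
            omega
          have hmax : 2 ^ (max (max ψA.depth ψg.depth) ψB.depth) ≤ (m+1)^16 := by
            rcases max_choice (max ψA.depth ψg.depth) ψB.depth with h | h <;> rw [h]
            · rcases max_choice ψA.depth ψg.depth with h' | h' <;> rw [h']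
              · exact hA2
              · exact hg2
            · exact hB2
          have hstep : 2 ^ (Formula.add (.mul ψA ψg) ψB).depth ≤ 4 * (m+1)^16 := by
            calc 2 ^ (Formula.add (.mul ψA ψg) ψB).depth
                ≤ 2 ^ (max (max ψA.depth ψg.depth) ψB.depth + 2) :=
                  Nat.pow_le_pow_right (by norm_num) hd
              _ = 4 * 2 ^ (max (max ψA.depth ψg.depth) ψB.depth) := by
                  rw [pow_add]; ring
              _ ≤ 4 * (m+1)^16 := by omega
          refine hstep.trans ?_
          -- 4 * (m+1)^16 ≤ (s+1)^16, since 8*(m+1) ≤ 7*(s+1)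
          have hlin : 8 * (m+1) ≤ 7 * (s+1) := by omega
          have hp : (8*(m+1))^16 ≤ (7*(s+1))^16 := Nat.pow_le_pow_left hlin _
          rw [mul_pow, mul_pow] at hp
          have hc : 4 * 7^16 ≤ 8^16 := by norm_num
          have h7 : 7^16 * (4 * (m+1)^16) ≤ 7^16 * (s+1)^16 := by
            calc 7^16 * (4 * (m+1)^16) = (4 * 7^16) * (m+1)^16 := by ring
              _ ≤ 8^16 * (m+1)^16 := Nat.mul_le_mul_right _ hc
              _ ≤ 7^16 * (s+1)^16 := hp
          exact Nat.le_of_mul_le_mul_left h7 (by norm_num)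

end FormulaDepth

end PartB1
section PartB2

namespace BenOrCleve

open Formula

variable {F : Type} [Field F] {k : ℕ}

/-- Square matrices over `F[x]`. -/
abbrev Mat (F : Type) [Field F] (k : ℕ) := Matrix (Fin k) (Fin k) (MvPolynomial ℕ F)

/-- Matrices allowed in the weakest-ABP simulation: constant matrices and
elementary matrices `1 + x_i·E_{ab}`. -/
def Allowed (M : Mat F k) : Prop :=
  (∀ a b, ∃ c : F, M a b = C c) ∨
  ∃ (i : ℕ) (a b : Fin k), a ≠ b ∧ M = 1 + Matrix.single a b (X i)

lemma allowed_weakest {M : Mat F k} (h : Allowed M) (a b : Fin k) :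
    IsWeakestForm (M a b) := by
  rcases h with h | ⟨i, x, y, hxy, rfl⟩
  · exact Or.inr (h a b)
  · rw [Matrix.add_apply]
    by_cases h1 : x = a ∧ y = b
    · obtain ⟨rfl, rfl⟩ := h1
      rw [Matrix.one_apply_ne hxy, Matrix.single, Matrix.of_apply, if_pos ⟨rfl, rfl⟩]
      exact Or.inl ⟨i, by rw [zero_add]⟩
    · have hstd : Matrix.single x y (X i : MvPolynomial ℕ F) a b = 0 := by
        rw [Matrix.single, Matrix.of_apply, if_neg h1]
      rw [hstd, add_zero]
      right
      by_cases h2 : a = b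
      · subst h2
        exact ⟨1, by rw [Matrix.one_apply_eq, MvPolynomial.C_1]⟩
      · exact ⟨0, by rw [Matrix.one_apply_ne h2, MvPolynomial.C_0]⟩

/-- The sign-flip diagonal matrix. -/
def signM (a : Fin k) : Mat F k :=
  Matrix.diagonal (fun j => if j = a then (-1 : MvPolynomial ℕ F) else 1)

lemma allowed_signM (a : Fin k) : Allowed (signM (F := F) a) := by
  left
  intro x y
  by_cases h : x = y
  · subst h
    rw [signM, Matrix.diagonal_apply_eq]
    by_cases h2 : x = a
    · exact ⟨-1, by rw [if_pos h2, map_neg, MvPolynomial.C_1]⟩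
    · exact ⟨1, by rw [if_neg h2, MvPolynomial.C_1]⟩
  · exact ⟨0, by rw [signM, Matrix.diagonal_apply_ne _ h, MvPolynomial.C_0]⟩

lemma signM_mul_signM (a : Fin k) : signM (F := F) a * signM a = 1 := by
  rw [signM, Matrix.diagonal_mul_diagonal]
  apply Matrix.ext
  intro x y
  by_cases h : x = y
  · subst h
    rw [Matrix.diagonal_apply_eq, Matrix.one_apply_eq]
    by_cases h2 : x = a <;> simp [h2]
  · rw [Matrix.diagonal_apply_ne _ h, Matrix.one_apply_ne h]

lemma signM_conj {a b : Fin k} (hab : a ≠ b) (q : MvPolynomial ℕ F) :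
    signM a * (1 + Matrix.single a b q) * signM a
      = 1 - Matrix.single a b q := by
  have hSES : signM a * Matrix.single a b q * signM a
      = -(Matrix.single a b q) := by
    apply Matrix.ext
    intro x y
    simp only [signM, Matrix.mul_diagonal, Matrix.diagonal_mul, Matrix.neg_apply,
      Matrix.single, Matrix.of_apply]
    by_cases h1 : a = x ∧ b = y
    · rcases h1 with ⟨rfl, rfl⟩
      rw [if_pos (show a = a ∧ b = b from ⟨rfl, rfl⟩), if_pos rfl,
        if_neg (show ¬(b = a) from fun h => hab h.symm)]
      ring
    · simp only [if_neg h1]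
      ring
  have expand : signM a * (1 + Matrix.single a b q) * signM a
      = signM a * signM a + signM a * Matrix.single a b q * signM a := by
    noncomm_ring
  rw [expand, signM_mul_signM, hSES, sub_eq_add_neg]

/-- The Ben-Or–Cleve commutator identity. -/
lemma quad {a b c : Fin k} (hca : c ≠ a) (hbc : b ≠ c) (hba : b ≠ a)
    (q r : MvPolynomial ℕ F) :
    ((1 + Matrix.single a c q) * (1 + Matrix.single c b r)) *
      ((1 - Matrix.single a c q) * (1 - Matrix.single c b r))
      = 1 + Matrix.single a b (q * r) := by
  set G := Matrix.single a c q with hG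
  set H := Matrix.single c b r with hH
  have hGG : G * G = 0 := Matrix.single_mul_single_of_ne (c := q) a c a hca q
  have hHH : H * H = 0 := Matrix.single_mul_single_of_ne (c := r) c b c hbc r
  have hHG : H * G = 0 := Matrix.single_mul_single_of_ne (c := r) c b a hba q
  have hGH : G * H = Matrix.single a b (q * r) :=
    Matrix.single_mul_single_same (c := q) a c b r
  have e2 : ((1+G)*(1+H))*((1-G)*(1-H)) = (1+G) * ((1+H)*(1-G)) * (1-H) := by
    noncomm_ring
  have e1 : (1+H)*(1-G) = 1 - G + H - H*G := by noncomm_ring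
  rw [hHG, sub_zero] at e1
  have e3 : (1+G) * (1 - G + H) = 1 + H + G*H - G*G := by noncomm_ring
  rw [hGG, sub_zero] at e3
  have e4 : (1 + H + G*H) * (1 - H) = 1 + G*H - H*H - G*(H*H) := by noncomm_ring
  rw [hHH, mul_zero, sub_zero, sub_zero] at e4
  rw [e2, e1, e3, e4, hGH]

lemma allowed_one_add_std_C (a b : Fin k) (c : F) :
    Allowed ((1 : Mat F k) + Matrix.single a b (C c)) := by
  left
  intro x y
  rw [Matrix.add_apply, Matrix.single, Matrix.of_apply]
  by_cases h1 : x = y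
  · subst h1
    by_cases h2 : a = x ∧ b = x
    · exact ⟨1 + c, by rw [if_pos h2, Matrix.one_apply_eq, map_add, MvPolynomial.C_1]⟩
    · exact ⟨1, by rw [if_neg h2, Matrix.one_apply_eq, add_zero, MvPolynomial.C_1]⟩
  · by_cases h2 : a = x ∧ b = y
    · exact ⟨c, by rw [if_pos h2, Matrix.one_apply_ne h1, zero_add]⟩
    · exact ⟨0, by rw [if_neg h2, Matrix.one_apply_ne h1, add_zero, MvPolynomial.C_0]⟩

lemma allowed_one_sub_std_C (a b : Fin k) (hab : a ≠ b) (c : F) :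
    Allowed ((1 : Mat F k) - Matrix.single a b (C c)) := by
  left
  intro x y
  rw [Matrix.sub_apply, Matrix.single, Matrix.of_apply]
  by_cases h2 : a = x ∧ b = y
  · have hxy : x ≠ y := by
      rintro rfl
      exact hab (h2.1.trans h2.2.symm)
    exact ⟨-c, by rw [if_pos h2, Matrix.one_apply_ne hxy, zero_sub, map_neg]⟩
  · by_cases h1 : x = y
    · subst h1
      exact ⟨1, by rw [if_neg h2, Matrix.one_apply_eq, sub_zero, MvPolynomial.C_1]⟩
    · exact ⟨0, by rw [if_neg h2, Matrix.one_apply_ne h1, sub_zero, MvPolynomial.C_0]⟩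

lemma third_index (hk : 3 ≤ k) (a b : Fin k) : ∃ c : Fin k, c ≠ a ∧ c ≠ b := by
  by_contra h
  push_neg at h
  have hsub : (Finset.univ : Finset (Fin k)) ⊆ {a, b} := by
    intro c _
    rcases eq_or_ne c a with rfl | hca
    · exact Finset.mem_insert_self _ _
    · rw [h c hca]
      exact Finset.mem_insert.mpr (Or.inr (Finset.mem_singleton_self _))
  have h1 := Finset.card_le_card hsub
  rw [Finset.card_univ, Fintype.card_fin] at h1
  have h2 : ({a, b} : Finset (Fin k)).card ≤ 2 :=
    (Finset.card_insert_le _ _).trans (by simp)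
  omega

/-- The Ben-Or–Cleve simulation: products of allowed matrices realizing
`1 ± f·E_{ab}`, of length exponential in the depth. -/
lemma bc (hk : 3 ≤ k) (φ : Formula F) : ∀ a b : Fin k, a ≠ b →
    ∃ Lp Lm : List (Mat F k),
      (∀ M ∈ Lp, Allowed M) ∧ (∀ M ∈ Lm, Allowed M) ∧
      Lp.length + 2 ≤ 4^(φ.depth+1) ∧ Lm.length ≤ 4^(φ.depth+1) ∧
      Lp.prod = 1 + Matrix.single a b φ.eval ∧
      Lm.prod = 1 - Matrix.single a b φ.eval := by
  induction φ with
  | var i =>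
    intro a b hab
    refine ⟨[1 + Matrix.single a b (X i)],
      [signM a, 1 + Matrix.single a b (X i), signM a], ?_, ?_, ?_, ?_, ?_, ?_⟩
    · intro M hM
      rw [List.mem_singleton] at hM
      subst hM
      exact Or.inr ⟨i, a, b, hab, rfl⟩
    · intro M hM
      simp only [List.mem_cons, List.not_mem_nil, or_false] at hM
      rcases hM with rfl | rfl | rfl
      · exact allowed_signM a
      · exact Or.inr ⟨i, a, b, hab, rfl⟩
      · exact allowed_signM a
    · norm_num [Formula.depth]
    · norm_num [Formula.depth]
    · simp [Formula.eval]
    · simp only [List.prod_cons, List.prod_nil, mul_one, Formula.eval]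
      rw [← mul_assoc]
      exact signM_conj hab _
  | const c =>
    intro a b hab
    refine ⟨[1 + Matrix.single a b (C c)],
      [1 - Matrix.single a b (C c)], ?_, ?_, ?_, ?_, ?_, ?_⟩
    · intro M hM
      rw [List.mem_singleton] at hM
      subst hM
      exact allowed_one_add_std_C a b c
    · intro M hM
      rw [List.mem_singleton] at hM
      subst hM
      exact allowed_one_sub_std_C a b hab c
    · norm_num [Formula.depth]
    · norm_num [Formula.depth]
    · simp [Formula.eval]
    · simp [Formula.eval]
  | add φ₁ φ₂ ih₁ ih₂ =>
    intro a b hab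
    obtain ⟨Lp₁, Lm₁, ha1, ha2, hl1, hl2, hp1, hm1⟩ := ih₁ a b hab
    obtain ⟨Lp₂, Lm₂, hb1, hb2, hl3, hl4, hp2, hm2⟩ := ih₂ a b hab
    have hP1 : (4:ℕ)^(φ₁.depth+1) ≤ 4^(max φ₁.depth φ₂.depth + 1) :=
      Nat.pow_le_pow_right (by norm_num) (Nat.add_le_add_right (le_max_left _ _) 1)
    have hP2 : (4:ℕ)^(φ₂.depth+1) ≤ 4^(max φ₁.depth φ₂.depth + 1) :=
      Nat.pow_le_pow_right (by norm_num) (Nat.add_le_add_right (le_max_right _ _) 1)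
    have h4 : (4:ℕ)^(max φ₁.depth φ₂.depth + 1 + 1)
        = 4 * 4^(max φ₁.depth φ₂.depth + 1) := by
      rw [pow_succ]; ring
    have h0 : Matrix.single a b φ₁.eval * Matrix.single a b φ₂.eval
        = (0 : Mat F k) :=
      Matrix.single_mul_single_of_ne (c := φ₁.eval) a b a (Ne.symm hab) φ₂.eval
    refine ⟨Lp₁ ++ Lp₂, Lm₁ ++ Lm₂, ?_, ?_, ?_, ?_, ?_, ?_⟩
    · intro M hM
      rcases List.mem_append.mp hM with h | h
      exacts [ha1 M h, hb1 M h]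
    · intro M hM
      rcases List.mem_append.mp hM with h | h
      exacts [ha2 M h, hb2 M h]
    · simp only [Formula.depth, List.length_append]
      omega
    · simp only [Formula.depth, List.length_append]
      omega
    · rw [List.prod_append, hp1, hp2]
      have e : (1 + Matrix.single a b φ₁.eval) * (1 + Matrix.single a b φ₂.eval)
          = 1 + (Matrix.single a b φ₁.eval + Matrix.single a b φ₂.eval)
            + Matrix.single a b φ₁.eval * Matrix.single a b φ₂.eval := by
        noncomm_ring
      rw [e, h0, add_zero, ← Matrix.single_add]
      rfl
    · rw [List.prod_append, hm1, hm2]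
      have e : (1 - Matrix.single a b φ₁.eval) * (1 - Matrix.single a b φ₂.eval)
          = 1 - (Matrix.single a b φ₁.eval + Matrix.single a b φ₂.eval)
            + Matrix.single a b φ₁.eval * Matrix.single a b φ₂.eval := by
        noncomm_ring
      rw [e, h0, add_zero, ← Matrix.single_add]
      rfl
  | mul φ₁ φ₂ ih₁ ih₂ =>
    intro a b hab
    obtain ⟨c, hca, hcb⟩ := third_index hk a b
    obtain ⟨Lp₁, Lm₁, ha1, ha2, hl1, hl2, hp1, hm1⟩ := ih₁ a c (Ne.symm hca)
    obtain ⟨Lp₂, Lm₂, hb1, hb2, hl3, hl4, hp2, hm2⟩ := ih₂ c b hcb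
    have hP1 : (4:ℕ)^(φ₁.depth+1) ≤ 4^(max φ₁.depth φ₂.depth + 1) :=
      Nat.pow_le_pow_right (by norm_num) (Nat.add_le_add_right (le_max_left _ _) 1)
    have hP2 : (4:ℕ)^(φ₂.depth+1) ≤ 4^(max φ₁.depth φ₂.depth + 1) :=
      Nat.pow_le_pow_right (by norm_num) (Nat.add_le_add_right (le_max_right _ _) 1)
    have h4 : (4:ℕ)^(max φ₁.depth φ₂.depth + 1 + 1)
        = 4 * 4^(max φ₁.depth φ₂.depth + 1) := by
      rw [pow_succ]; ring
    have hprodLp : ((Lp₁ ++ Lp₂) ++ (Lm₁ ++ Lm₂)).prod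
        = 1 + Matrix.single a b (φ₁.eval * φ₂.eval) := by
      rw [List.prod_append, List.prod_append, List.prod_append, hp1, hp2, hm1, hm2]
      exact quad hca (Ne.symm hcb) (Ne.symm hab) _ _
    refine ⟨(Lp₁ ++ Lp₂) ++ (Lm₁ ++ Lm₂),
      signM a :: ((Lp₁ ++ Lp₂) ++ (Lm₁ ++ Lm₂)) ++ [signM a], ?_, ?_, ?_, ?_, ?_, ?_⟩
    · intro M hM
      rcases List.mem_append.mp hM with h | h
      · rcases List.mem_append.mp h with h' | h'
        exacts [ha1 M h', hb1 M h']
      · rcases List.mem_append.mp h with h' | h'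
        exacts [ha2 M h', hb2 M h']
    · intro M hM
      rcases List.mem_cons.mp hM with rfl | hM'
      · exact allowed_signM a
      · rcases List.mem_append.mp hM' with h | h
        · rcases List.mem_append.mp h with h' | h'
          · rcases List.mem_append.mp h' with h'' | h''
            exacts [ha1 M h'', hb1 M h'']
          · rcases List.mem_append.mp h' with h'' | h''
            exacts [ha2 M h'', hb2 M h'']
        · rw [List.mem_singleton] at h
          subst h
          exact allowed_signM a
    · simp only [Formula.depth, List.length_append]
      omega
    · simp only [Formula.depth, List.length_cons, List.length_append, List.length_singleton,
        List.length_nil]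
      omega
    · rw [hprodLp]
      rfl
    · simp only [Formula.eval]
      rw [List.prod_append, List.prod_cons, List.prod_singleton, hprodLp]
      exact signM_conj hab _

end BenOrCleve

end PartB2
section PartB3

namespace BenOrCleve

variable {F : Type} [Field F] {k : ℕ}

lemma abp_of_formula (hk : 3 ≤ k) (ψ : Formula F) :
    ∃ s' ≤ 4^(ψ.depth+1), ABPComputes IsWeakestForm k s' ψ.eval := by
  have h0 : 0 < k := by omega
  have h1 : 1 < k := by omega
  set a0 : Fin k := ⟨0, h0⟩ with ha0
  set b0 : Fin k := ⟨1, h1⟩ with hb0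
  have h01 : a0 ≠ b0 := by
    simp [ha0, hb0, Fin.ext_iff]
  obtain ⟨Lp, Lm, hallow, _, hlen, _, hprod, _⟩ := bc hk ψ a0 b0 h01
  refine ⟨Lp.length, by omega, ?_⟩
  refine ⟨(fun x => if x = a0 then 1 else 0), (fun x => if x = b0 then 1 else 0),
    Lp.get, ?_, ?_⟩
  · intro i a b
    exact allowed_weakest (hallow _ (Lp.get_mem i)) a b
  · rw [List.ofFn_get, hprod]
    simp only [dotProduct, Matrix.mulVec, apply_ite C, map_one, map_zero, ite_mul,
      mul_ite, one_mul, zero_mul, mul_one, mul_zero, Finset.sum_ite_eq', Finset.mem_univ,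
      if_true]
    rw [Matrix.add_apply, Matrix.one_apply_ne h01, Matrix.single_apply_same, zero_add]

end BenOrCleve

lemma vpe_subset_vpk_weakest (F : Type) [Field F] (k : ℕ) (hk : 3 ≤ k) :
    VPe F ⊆ VPkClass F k IsWeakestForm := by
  rintro f ⟨hfam, s, hs, hform⟩
  refine ⟨hfam, fun n => 16 * ((s n + 1)^16)^2, ?_, ?_⟩
  · apply polyBounded_mul (polyBounded_const 16)
    apply polyBounded_pow
    apply polyBounded_pow
    exact polyBounded_add hs (polyBounded_const 1)
  · intro n
    obtain ⟨φ, hsize, heval⟩ := hform n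
    obtain ⟨ψ, hev2, hdep⟩ := FormulaDepth.brent (s n) φ hsize
    obtain ⟨s', hs', habp⟩ := BenOrCleve.abp_of_formula hk ψ
    rw [hev2, heval] at habp
    refine ⟨s', ?_, habp⟩
    have h1 : (4:ℕ)^(ψ.depth+1) = 4 * (2^ψ.depth)^2 := by
      rw [pow_succ, ← pow_mul, show (4:ℕ) = 2^2 from rfl, ← pow_mul]
      ring
    have h2 : (2^ψ.depth)^2 ≤ ((s n + 1)^16)^2 := Nat.pow_le_pow_left hdep 2
    show s' ≤ 16 * ((s n + 1)^16)^2
    omega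

lemma weakest_to_weak {F : Type} [CommSemiring F] {p : MvPolynomial ℕ F}
    (h : IsWeakestForm p) : IsWeakForm p := by
  rcases h with ⟨i, rfl⟩ | ⟨c, rfl⟩
  · exact ⟨1, 0, i, by simp⟩
  · exact ⟨0, c, 0, by simp⟩

lemma weak_to_gen {F : Type} [Field F] {p : MvPolynomial ℕ F}
    (h : IsWeakForm p) : IsGenForm p := by
  obtain ⟨α, β, i, rfl⟩ := h
  refine le_trans (MvPolynomial.totalDegree_add _ _) ?_
  apply max_le
  · refine le_trans (MvPolynomial.totalDegree_mul _ _) ?_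
    rw [MvPolynomial.totalDegree_C, zero_add]
    rcases subsingleton_or_nontrivial (MvPolynomial ℕ F) with hs | hn
    · rw [Subsingleton.elim (X i : MvPolynomial ℕ F) 0]
      simp
    · rw [MvPolynomial.totalDegree_X]
  · rw [MvPolynomial.totalDegree_C]
    omega

lemma vpk_mono {F : Type} [CommSemiring F] {k : ℕ} {f1 f2 : MvPolynomial ℕ F → Prop}
    (h : ∀ p, f1 p → f2 p) : VPkClass F k f1 ⊆ VPkClass F k f2 := by
  rintro f ⟨hfam, s, hs, hcomp⟩
  refine ⟨hfam, s, hs, fun n => ?_⟩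
  obtain ⟨s', hs', vv, ww, M, hforms, hp⟩ := hcomp n
  exact ⟨s', hs', vv, ww, M, fun i a b => h _ (hforms i a b), hp⟩

end PartB3
/-- Ben-Or–Cleve: for every `k ≥ 3` and every label type
`* ∈ {weakest, weak, gen}`, `VP_k^*(F) = VPe(F)`. -/
theorem statement5 (F : Type) [Field F] (k : ℕ) (hk : 3 ≤ k) :
    VPkClass F k IsWeakestForm = VPe F ∧
    VPkClass F k IsWeakForm = VPe F ∧
    VPkClass F k IsGenForm = VPe F := by
  have hk1 : 1 ≤ k := by omega
  have hsub1 : VPkClass F k IsWeakestForm ⊆ VPkClass F k IsWeakForm :=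
    vpk_mono (fun p => weakest_to_weak)
  have hsub2 : VPkClass F k IsWeakForm ⊆ VPkClass F k IsGenForm :=
    vpk_mono (fun p => weak_to_gen)
  have hA : VPkClass F k IsGenForm ⊆ VPe F := vpk_gen_subset_vpe F k hk1
  have hB : VPe F ⊆ VPkClass F k IsWeakestForm := vpe_subset_vpk_weakest F k hk
  refine ⟨?_, ?_, ?_⟩
  · exact Set.Subset.antisymm (hsub1.trans (hsub2.trans hA)) hB
  · exact Set.Subset.antisymm (hsub2.trans hA) (hB.trans hsub1)
  · exact Set.Subset.antisymm hA (hB.trans (hsub1.trans hsub2))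

end
end

section
/- (Addition lemma) Let F be a field, k ≥ 1, and let f, g ∈ F[x_1,…,x_m] be polynomials such that some matrix F' ∈ Q(f) + O(ε^k) can be written as a product of n primitive Q-matrices and some matrix G ∈ Q(g) + O(ε^k) can be written as a product of m' primitive Q-matrices. Then some matrix H ∈ Q(f+g) + O(ε^k) can be written as a product of n + m' + 1 primitive Q-matrices; moreover, if F' and G have error degrees at most e_f and e_g respectively, then H has error degree at most e_f + e_g. -/
open MvPolynomial

noncomputable section

section Statement7Aux

variable {F : Type} [Field F]

lemma aux_isProdPrimQ_mul {a b : ℕ}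
    {M N : Matrix (Fin 2) (Fin 2) (MvPolynomial ℕ (RatFunc F))}
    (hM : IsProdPrimQ F a M) (hN : IsProdPrimQ F b N) :
    IsProdPrimQ F (a + b) (M * N) := by
  obtain ⟨L1, h1, rfl⟩ := hM
  obtain ⟨L2, h2, rfl⟩ := hN
  refine ⟨Fin.append L1 L2, fun i => ?_, ?_⟩
  · refine Fin.addCases (fun i => ?_) (fun i => ?_) i
    · rw [Fin.append_left]; exact h1 i
    · rw [Fin.append_right]; exact h2 i
  · rw [List.ofFn_fin_append, List.prod_append]

lemma aux_Qmat_mul {R : Type} [CommRing R] (A B : MvPolynomial ℕ R) :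
    Qmat A * Qmat 0 * Qmat B = Qmat (A + B) := by
  ext i j
  fin_cases i <;> fin_cases j <;>
    simp [Qmat, Matrix.mul_apply, Fin.sum_univ_two] <;> ring

lemma aux_Qmat_map {R S : Type} [CommSemiring R] [CommSemiring S] (φ : R →+* S)
    (p : MvPolynomial ℕ R) :
    (Qmat p).map (MvPolynomial.map φ) = Qmat (MvPolynomial.map φ p) := by
  ext i j; fin_cases i <;> fin_cases j <;> simp [Qmat, Matrix.map_apply]

lemma aux_map_smul {R S : Type} [CommSemiring R] [CommSemiring S] (φ : R →+* S) (a : R)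
    (M : Matrix (Fin 2) (Fin 2) R) : (a • M).map φ = φ a • M.map φ := by
  ext i j; simp [Matrix.map_apply, smul_eq_mul]

lemma aux_liftPoly_comp (p : MvPolynomial ℕ F) :
    liftPolyε F (MvPolynomial.map (algebraMap F (Polynomial F)) p) = liftε F p := by
  show (MvPolynomial.map _) ((MvPolynomial.map _) p) = _
  rw [MvPolynomial.map_map, liftε, ← IsScalarTower.algebraMap_eq]

lemma aux_liftPoly_CX (k : ℕ) :
    liftPolyε F (MvPolynomial.C (Polynomial.X ^ k)) =
      MvPolynomial.C ((RatFunc.X : RatFunc F) ^ k) := by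
  show (MvPolynomial.map _) _ = _
  rw [MvPolynomial.map_C, map_pow, RatFunc.algebraMap_X]

/-- Every coefficient of `p` has `ε`-degree at most `a`. -/
def DegLE (p : MvPolynomial ℕ (Polynomial F)) (a : ℕ) : Prop :=
  ∀ m : ℕ →₀ ℕ, (MvPolynomial.coeff m p).natDegree ≤ a

lemma aux_DegLE_mul {p q : MvPolynomial ℕ (Polynomial F)} {a b : ℕ}
    (hp : DegLE p a) (hq : DegLE q b) : DegLE (p * q) (a + b) := by
  intro m
  rw [MvPolynomial.coeff_mul]
  refine Polynomial.natDegree_sum_le_of_forall_le _ _ fun x _ => ?_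
  exact Polynomial.natDegree_mul_le.trans (add_le_add (hp _) (hq _))

lemma aux_MDegLE_mul {M N : Matrix (Fin 2) (Fin 2) (MvPolynomial ℕ (Polynomial F))} {a b : ℕ}
    (hM : ∀ i j, DegLE (M i j) a) (hN : ∀ i j, DegLE (N i j) b) :
    ∀ i j, DegLE ((M * N) i j) (a + b) := by
  intro i j m
  rw [Matrix.mul_apply, Fin.sum_univ_two, MvPolynomial.coeff_add]
  exact (Polynomial.natDegree_add_le _ _).trans
    (max_le (aux_DegLE_mul (hM i 0) (hN 0 j) m) (aux_DegLE_mul (hM i 1) (hN 1 j) m))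

lemma aux_DegLE_Q0 :
    ∀ i j, DegLE ((Qmat (0 : MvPolynomial ℕ (Polynomial F))) i j) 0 := by
  intro i j m
  fin_cases i <;> fin_cases j <;>
    simp [Qmat, MvPolynomial.coeff_one] <;> split <;> simp

end Statement7Aux

/-- Addition lemma. -/
theorem statement7 (F : Type) [Field F] (k : ℕ) (hk : 1 ≤ k)
    (f g : MvPolynomial ℕ F) (n m' : ℕ)
    (F' G : Matrix (Fin 2) (Fin 2) (MvPolynomial ℕ (RatFunc F)))
    (hF1 : InQErr F f k F') (hF2 : IsProdPrimQ F n F')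
    (hG1 : InQErr F g k G) (hG2 : IsProdPrimQ F m' G) :
    ∃ H : Matrix (Fin 2) (Fin 2) (MvPolynomial ℕ (RatFunc F)),
      InQErr F (f + g) k H ∧ IsProdPrimQ F (n + m' + 1) H ∧
      ∀ e_f e_g : ℕ, ErrDegLE F F' e_f → ErrDegLE F G e_g →
        ErrDegLE F H (e_f + e_g) := by
  obtain ⟨Ef, hEf⟩ := hF1
  obtain ⟨Eg, hEg⟩ := hG1
  set c : MvPolynomial ℕ (RatFunc F) := MvPolynomial.C ((RatFunc.X : RatFunc F) ^ k) with hc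
  set L := liftPolyε F with hL
  refine ⟨F' * Qmat 0 * G, ?_, ?_, ?_⟩
  · -- InQErr
    set fP := MvPolynomial.map (algebraMap F (Polynomial F)) f with hfP
    set gP := MvPolynomial.map (algebraMap F (Polynomial F)) g with hgP
    refine ⟨Ef * Qmat 0 * Qmat gP + Qmat fP * Qmat 0 * Eg +
      (MvPolynomial.C (Polynomial.X ^ k) : MvPolynomial ℕ (Polynomial F)) •
        (Ef * Qmat 0 * Eg), ?_⟩
    have hmapQ0 : (Qmat (0 : MvPolynomial ℕ (Polynomial F))).map L
        = Qmat (0 : MvPolynomial ℕ (RatFunc F)) := by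
      rw [hL, liftPolyε, aux_Qmat_map, map_zero]
    have hmapQg : (Qmat gP).map L = Qmat (liftε F g) := by
      rw [hL, liftPolyε, aux_Qmat_map]
      rw [hgP]
      rw [show MvPolynomial.map (algebraMap (Polynomial F) (RatFunc F))
            (MvPolynomial.map (algebraMap F (Polynomial F)) g) = liftε F g from
        aux_liftPoly_comp g]
    have hmapQf : (Qmat fP).map L = Qmat (liftε F f) := by
      rw [hL, liftPolyε, aux_Qmat_map]
      rw [hfP]
      rw [show MvPolynomial.map (algebraMap (Polynomial F) (RatFunc F))
            (MvPolynomial.map (algebraMap F (Polynomial F)) f) = liftε F f from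
        aux_liftPoly_comp f]
    have hLring : ∀ (A B : Matrix (Fin 2) (Fin 2) (MvPolynomial ℕ (Polynomial F))),
        (A * B).map L = A.map L * B.map L := fun A B => Matrix.map_mul
    rw [hEf, hEg]
    rw [Matrix.map_add, Matrix.map_add, hLring, hLring, hLring, hLring,
      aux_map_smul, hLring, hLring, hmapQ0, hmapQg, hmapQf]
    rw [show L (MvPolynomial.C (Polynomial.X ^ k)) = c from aux_liftPoly_CX k]
    rw [show liftε F (f + g) = liftε F f + liftε F g from map_add _ _ _]
    rw [← aux_Qmat_mul (liftε F f) (liftε F g)]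
    simp only [add_mul, mul_add, Matrix.smul_mul, Matrix.mul_smul, smul_add,
      smul_smul, ← hc]
    abel
    all_goals exact fun a b => map_add L a b
  · -- product of primitive Q-matrices
    have h0 : IsProdPrimQ F 1 (Qmat (0 : MvPolynomial ℕ (RatFunc F))) := by
      refine ⟨fun _ => Qmat 0, fun _ => ⟨0, by simp, rfl⟩, by simp⟩
    have h2 := aux_isProdPrimQ_mul (aux_isProdPrimQ_mul hF2 h0) hG2
    have heq : n + 1 + m' = n + m' + 1 := by omega
    exact heq ▸ h2
  · -- error degree
    rintro e_f e_g ⟨Ef2, hEf2, hdf⟩ ⟨Eg2, hEg2, hdg⟩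
    refine ⟨Ef2 * Qmat 0 * Eg2, ?_, ?_⟩
    · have hmapQ0 : (Qmat (0 : MvPolynomial ℕ (Polynomial F))).map L
          = Qmat (0 : MvPolynomial ℕ (RatFunc F)) := by
        rw [hL, liftPolyε, aux_Qmat_map, map_zero]
      have hLring : ∀ (A B : Matrix (Fin 2) (Fin 2) (MvPolynomial ℕ (Polynomial F))),
          (A * B).map L = A.map L * B.map L := fun A B => Matrix.map_mul
      rw [hEf2, hEg2, hLring, hLring, hmapQ0]
    · intro a b m
      have h := aux_MDegLE_mul (aux_MDegLE_mul (fun i j => hdf i j) aux_DegLE_Q0)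
        (fun i j => hdg i j) a b
      simpa using h m


end
end

section
/- Let F be an infinite field with characteristic different from 2. Then the poly-approximation closure of VPe(F) equals VPe(F): if for a family (f_n) there exist polynomials f_{n;1},…,f_{n;e(n)} over F with e(n) ∈ poly(n) such that f_n + ε f_{n;1} + … + ε^{e(n)} f_{n;e(n)} is computed by arithmetic formulas over F(ε) of size poly(n), then (f_n) itself has polynomially bounded formula size over F. -/
open MvPolynomial

noncomputable section

set_option linter.unusedSectionVars false
set_option linter.unnecessarySimpa false

/-! ### Auxiliary machinery for the proof -/

namespace Formula

variable {F K L : Type} [CommSemiring F] [CommSemiring K]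

/-- Map a formula along a function on constants. -/
def mapC (g : F → K) : Formula F → Formula K
  | var i => var i
  | const c => const (g c)
  | add φ ψ => add (φ.mapC g) (ψ.mapC g)
  | mul φ ψ => mul (φ.mapC g) (ψ.mapC g)

lemma size_mapC (g : F → K) (φ : Formula F) : (φ.mapC g).size = φ.size := by
  induction φ <;> simp [mapC, size, *]

lemma eval_mapC (g : F →+* K) (φ : Formula F) :
    (φ.mapC g).eval = MvPolynomial.map g φ.eval := by
  induction φ with
  | var i => simp [mapC, eval]
  | const c => simp [mapC, eval]
  | add φ ψ ihφ ihψ => simp [mapC, eval, ihφ, ihψ]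
  | mul φ ψ ihφ ihψ => simp [mapC, eval, ihφ, ihψ]

/-- The list of constants occurring in a formula. -/
def consts : Formula F → List F
  | var _ => []
  | const c => [c]
  | add φ ψ => φ.consts ++ ψ.consts
  | mul φ ψ => φ.consts ++ ψ.consts

/-- Sum of a list of formulas. -/
def listSum : List (Formula F) → Formula F := fun L => L.foldr add (const 0)

lemma eval_listSum (L : List (Formula F)) : (listSum L).eval = (L.map eval).sum := by
  induction L with
  | nil => simp [listSum, eval]
  | cons a l ih => simp [listSum, eval, List.foldr] at ih ⊢; exact ih ▸ rfl

lemma size_listSum (L : List (Formula F)) :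
    (listSum L).size ≤ (L.map size).sum + L.length := by
  induction L with
  | nil => simp [listSum, size]
  | cons a l ih => simp [listSum, size, List.foldr] at ih ⊢; omega

end Formula

section Specialization

variable (F : Type) [Field F]

lemma denom_eval_ne_add {α : F} {x y : RatFunc F} (hx : (RatFunc.denom x).eval α ≠ 0)
    (hy : (RatFunc.denom y).eval α ≠ 0) : (RatFunc.denom (x + y)).eval α ≠ 0 := by
  have h := Polynomial.eval_dvd (x := α) (RatFunc.denom_add_dvd x y)
  rw [Polynomial.eval_mul] at h
  exact ne_zero_of_dvd_ne_zero (mul_ne_zero hx hy) h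

lemma denom_eval_ne_mul {α : F} {x y : RatFunc F} (hx : (RatFunc.denom x).eval α ≠ 0)
    (hy : (RatFunc.denom y).eval α ≠ 0) : (RatFunc.denom (x * y)).eval α ≠ 0 := by
  have h := Polynomial.eval_dvd (x := α) (RatFunc.denom_mul_dvd x y)
  rw [Polynomial.eval_mul] at h
  exact ne_zero_of_dvd_ne_zero (mul_ne_zero hx hy) h

/-- The subring of rational functions defined at `α`. -/
def goodAt (α : F) : Subring (RatFunc F) where
  carrier := {r | (RatFunc.denom r).eval α ≠ 0}
  one_mem' := by simp [RatFunc.denom_one]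
  zero_mem' := by simp [RatFunc.denom_zero]
  add_mem' hx hy := denom_eval_ne_add F hx hy
  mul_mem' hx hy := denom_eval_ne_mul F hx hy
  neg_mem' {x} hx := by
    have h : -x = (algebraMap (Polynomial F) (RatFunc F) (-1)) * x := by simp
    rw [Set.mem_setOf_eq, h]
    refine denom_eval_ne_mul F ?_ hx
    rw [RatFunc.denom_algebraMap]; simp

lemma eval₂_id_denom {α : F} (x : goodAt F α) :
    Polynomial.eval₂ (RingHom.id F) α (RatFunc.denom (x : RatFunc F)) ≠ 0 := x.2

/-- Evaluation at `α` as a ring hom on the subring of defined rational functions. -/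
def evalHomAt (α : F) : goodAt F α →+* F where
  toFun r := RatFunc.eval (RingHom.id F) α (r : RatFunc F)
  map_one' := by simpa using RatFunc.eval_one (RingHom.id F) α
  map_zero' := by simpa using RatFunc.eval_zero (RingHom.id F) α
  map_add' x y := by
    simpa using RatFunc.eval_add (f := RingHom.id F) (a := α)
      (eval₂_id_denom F x) (eval₂_id_denom F y)
  map_mul' x y := by
    simpa using RatFunc.eval_mul (f := RingHom.id F) (a := α)
      (eval₂_id_denom F x) (eval₂_id_denom F y)

lemma algebraMap_mem_goodAt (α : F) (p : Polynomial F) :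
    algebraMap (Polynomial F) (RatFunc F) p ∈ goodAt F α := by
  show (RatFunc.denom _).eval α ≠ 0
  rw [RatFunc.denom_algebraMap]; simp

/-- Corestriction of `algebraMap (Polynomial F) (RatFunc F)` to `goodAt`. -/
def polyToGood (α : F) : Polynomial F →+* goodAt F α :=
  (algebraMap (Polynomial F) (RatFunc F)).codRestrict (goodAt F α) (algebraMap_mem_goodAt F α)

lemma evalHomAt_comp_polyToGood (α : F) :
    (evalHomAt F α).comp (polyToGood F α) = Polynomial.evalRingHom α := by
  refine RingHom.ext fun p => ?_
  show RatFunc.eval (RingHom.id F) α (algebraMap (Polynomial F) (RatFunc F) p) = _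
  rw [RatFunc.eval_algebraMap]
  simp

lemma exists_lift (α : F) (φ : Formula (RatFunc F))
    (h : ∀ c ∈ φ.consts, c ∈ goodAt F α) :
    ∃ ψ : Formula (goodAt F α), ψ.mapC (⇑(goodAt F α).subtype) = φ := by
  induction φ with
  | var i => exact ⟨.var i, rfl⟩
  | const c => exact ⟨.const ⟨c, h c (by simp [Formula.consts])⟩, rfl⟩
  | add φ₁ φ₂ ih₁ ih₂ =>
      obtain ⟨ψ₁, h₁⟩ := ih₁ fun c hc => h c (by simp [Formula.consts, hc])
      obtain ⟨ψ₂, h₂⟩ := ih₂ fun c hc => h c (by simp [Formula.consts, hc])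
      exact ⟨.add ψ₁ ψ₂, by simp only [Formula.mapC, h₁, h₂]⟩
  | mul φ₁ φ₂ ih₁ ih₂ =>
      obtain ⟨ψ₁, h₁⟩ := ih₁ fun c hc => h c (by simp [Formula.consts, hc])
      obtain ⟨ψ₂, h₂⟩ := ih₂ fun c hc => h c (by simp [Formula.consts, hc])
      exact ⟨.mul ψ₁ ψ₂, by simp only [Formula.mapC, h₁, h₂]⟩

/-- Specialization of a formula over `F(ε)` whose constants avoid poles at `α`. -/
lemma spec_eval (α : F) (G : MvPolynomial ℕ (Polynomial F)) (φ : Formula (RatFunc F))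
    (hφ : φ.eval = liftPolyε F G)
    (h : ∀ c ∈ φ.consts, (RatFunc.denom c).eval α ≠ 0) :
    ∃ σ : Formula F, σ.size = φ.size ∧
      σ.eval = MvPolynomial.map (Polynomial.evalRingHom α) G := by
  obtain ⟨ψ, rfl⟩ := exists_lift F α φ h
  refine ⟨ψ.mapC (evalHomAt F α), by rw [Formula.size_mapC, Formula.size_mapC], ?_⟩
  have hinj : Function.Injective ⇑(goodAt F α).subtype := Subtype.val_injective
  have h2 : ψ.eval = MvPolynomial.map (polyToGood F α) G := by
    apply MvPolynomial.map_injective _ hinj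
    rw [← Formula.eval_mapC ((goodAt F α).subtype) ψ, hφ, MvPolynomial.map_map]
    rfl
  rw [Formula.eval_mapC, h2, MvPolynomial.map_map, evalHomAt_comp_polyToGood]

/-- The approximating polynomial over `F[ε]`. -/
def Gfam (f : MvPolynomial ℕ F) (en : ℕ) (ferr : ℕ → MvPolynomial ℕ F) :
    MvPolynomial ℕ (Polynomial F) :=
  MvPolynomial.map (Polynomial.C : F →+* Polynomial F) f +
    ∑ i ∈ Finset.range en,
      C (Polynomial.X ^ (i + 1)) * MvPolynomial.map (Polynomial.C : F →+* Polynomial F) (ferr i)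

lemma algebraMap_comp_C :
    (algebraMap (Polynomial F) (RatFunc F)).comp (Polynomial.C : F →+* Polynomial F) =
      algebraMap F (RatFunc F) := by
  refine RingHom.ext fun x => ?_
  rw [RingHom.comp_apply, RatFunc.algebraMap_C, RatFunc.algebraMap_eq_C]

lemma liftPolyε_Gfam (f : MvPolynomial ℕ F) (en : ℕ) (ferr : ℕ → MvPolynomial ℕ F) :
    liftPolyε F (Gfam F f en ferr) =
      liftε F f + ∑ i ∈ Finset.range en,
        C ((RatFunc.X : RatFunc F) ^ (i + 1)) * liftε F (ferr i) := by
  unfold Gfam liftPolyε liftε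
  rw [map_add, map_sum]
  congr 1
  · rw [MvPolynomial.map_map, algebraMap_comp_C]
  · refine Finset.sum_congr rfl fun i _ => ?_
    rw [map_mul, MvPolynomial.map_map, algebraMap_comp_C, MvPolynomial.map_C,
      map_pow, RatFunc.algebraMap_X]

lemma evalRingHom_Gfam (α : F) (f : MvPolynomial ℕ F) (en : ℕ)
    (ferr : ℕ → MvPolynomial ℕ F) :
    MvPolynomial.map (Polynomial.evalRingHom α) (Gfam F f en ferr) =
      f + ∑ i ∈ Finset.range en, C (α ^ (i + 1)) * ferr i := by
  have hcomp : (Polynomial.evalRingHom α).comp (Polynomial.C : F →+* Polynomial F) =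
      RingHom.id F := by
    refine RingHom.ext fun x => ?_; simp
  unfold Gfam
  rw [map_add, map_sum]
  congr 1
  · rw [MvPolynomial.map_map, hcomp, MvPolynomial.map_id]
  · refine Finset.sum_congr rfl fun i _ => ?_
    rw [map_mul, MvPolynomial.map_map, hcomp, MvPolynomial.map_id, MvPolynomial.map_C]
    simp

end Specialization

section Interp

variable {F : Type} [Field F]

lemma exists_interp {N : ℕ} (α : Fin N → F) (hα : Function.Injective α) :
    ∃ lam : Fin N → F, ∀ i : Fin N,
      (∑ j, lam j * α j ^ (i : ℕ)) = if (i : ℕ) = 0 then 1 else 0 := by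
  set W := Matrix.vandermonde α with hW
  have hdet : IsUnit W.det := by
    rw [isUnit_iff_ne_zero, hW, Matrix.det_vandermonde_ne_zero_iff]
    exact hα
  set e0 : Fin N → F := fun i => if (i : ℕ) = 0 then 1 else 0 with he0
  refine ⟨Matrix.vecMul e0 W⁻¹, fun i => ?_⟩
  have h1 : Matrix.vecMul (Matrix.vecMul e0 W⁻¹) W = e0 := by
    rw [Matrix.vecMul_vecMul, Matrix.nonsing_inv_mul W hdet, Matrix.vecMul_one]
  have h2 := congrFun h1 i
  simpa [Matrix.vecMul, dotProduct, hW, Matrix.vandermonde, he0] using h2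

lemma exists_good_points [Infinite F] (d : Polynomial F) (hd : d ≠ 0) (N : ℕ) :
    ∃ α : Fin N → F, Function.Injective α ∧ ∀ j, d.eval (α j) ≠ 0 := by
  have hfin : {x : F | d.IsRoot x}.Finite := Polynomial.finite_setOf_isRoot hd
  have hinf : {x : F | d.IsRoot x}ᶜ.Infinite := hfin.infinite_compl
  refine ⟨fun j => (Set.Infinite.natEmbedding _ hinf (j : ℕ) : F), ?_, ?_⟩
  · intro a b hab
    exact Fin.val_injective ((Set.Infinite.natEmbedding _ hinf).injective
      (Subtype.val_injective hab))
  · intro j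
    have h := (Set.Infinite.natEmbedding _ hinf (j : ℕ)).2
    rw [Set.mem_compl_iff, Set.mem_setOf_eq] at h
    exact h

lemma interp_sum {en : ℕ} (f : MvPolynomial ℕ F) (ferr : ℕ → MvPolynomial ℕ F)
    (α lam : Fin (en + 1) → F)
    (hlam : ∀ i : Fin (en + 1),
      (∑ j, lam j * α j ^ (i : ℕ)) = if (i : ℕ) = 0 then 1 else 0) :
    ∑ j, C (lam j) * (f + ∑ i ∈ Finset.range en, C (α j ^ (i + 1)) * ferr i) = f := by
  have key : ∀ m : ℕ, m ≤ en → (∑ j, lam j * α j ^ m) = if m = 0 then 1 else 0 := by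
    intro m hm
    simpa using hlam ⟨m, by omega⟩
  have h0 : (∑ j, lam j) = 1 := by simpa using key 0 (by omega)
  have hsum : ∀ i ∈ Finset.range en, (∑ j, lam j * α j ^ (i + 1)) = 0 := by
    intro i hi
    rw [Finset.mem_range] at hi
    simpa using key (i + 1) (by omega)
  calc
    ∑ j, C (lam j) * (f + ∑ i ∈ Finset.range en, C (α j ^ (i + 1)) * ferr i)
        = (∑ j, C (lam j)) * f
          + ∑ i ∈ Finset.range en, C (∑ j, lam j * α j ^ (i + 1)) * ferr i := by
        simp only [mul_add, Finset.mul_sum, Finset.sum_add_distrib]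
        congr 1
        · rw [Finset.sum_mul]
        · rw [Finset.sum_comm]
          refine Finset.sum_congr rfl fun i _ => ?_
          rw [map_sum, Finset.sum_mul]
          refine Finset.sum_congr rfl fun j _ => ?_
          rw [map_mul]; ring
    _ = f := by
        rw [← map_sum, h0, MvPolynomial.C_1, one_mul]
        rw [Finset.sum_congr rfl fun i hi => by
          rw [hsum i hi, MvPolynomial.C_0, zero_mul]]
        simp

end Interp

lemma polyBounded_bound {e s : ℕ → ℕ} (he : PolyBounded e) (hs : PolyBounded s) :
    PolyBounded (fun n => (e n + 1) * (s n + 2)) := by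
  obtain ⟨a, ha⟩ := he
  obtain ⟨b, hb⟩ := hs
  refine ⟨a + b + 3, fun n => ?_⟩
  have h2 : 2 ≤ n + 2 := by omega
  have hA : 1 ≤ (n + 2) ^ a := Nat.one_le_pow _ _ (by omega)
  have hB : 1 ≤ (n + 2) ^ b := Nat.one_le_pow _ _ (by omega)
  have h8 : 8 ≤ (n + 2) ^ 3 := by
    calc (8 : ℕ) = 2 ^ 3 := rfl
    _ ≤ (n + 2) ^ 3 := Nat.pow_le_pow_left h2 3
  have ha' := ha n
  have hb' := hb n
  calc (e n + 1) * (s n + 2)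
      ≤ (2 * (n + 2) ^ a) * (4 * (n + 2) ^ b) := Nat.mul_le_mul (by omega) (by omega)
    _ = 8 * ((n + 2) ^ a * (n + 2) ^ b) := by ring
    _ ≤ (n + 2) ^ 3 * ((n + 2) ^ a * (n + 2) ^ b) := Nat.mul_le_mul_right _ h8
    _ = (n + 2) ^ (a + b + 3) := by rw [pow_add, pow_add]; ring

/-- if `F` is infinite with `char F ≠ 2`, the poly-approximation closure of
`VPe(F)` equals `VPe(F)`. -/
theorem statement11 (F : Type) [Field F] [Infinite F] (hF : ringChar F ≠ 2) :
    PolyApproxClosure F (VPe (RatFunc F)) = VPe F := by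
  ext f
  constructor
  · rintro ⟨hf, e, he, ferr, hg⟩
    obtain ⟨-, s, hs, hforms⟩ := hg
    refine ⟨hf, fun n => (e n + 1) * (s n + 2), polyBounded_bound he hs, fun n => ?_⟩
    obtain ⟨φ, hφsize, hφeval⟩ := hforms n
    have hφG : φ.eval = liftPolyε F (Gfam F (f n) (e n) (ferr n)) := by
      rw [hφeval, liftPolyε_Gfam]
    set d : Polynomial F := ((φ.consts).map RatFunc.denom).prod with hd
    have hdne : d ≠ 0 := by
      refine List.prod_ne_zero fun h0 => ?_
      obtain ⟨c, -, hc⟩ := List.mem_map.mp h0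
      exact RatFunc.denom_ne_zero c hc
    obtain ⟨α, hαinj, hαgood⟩ := exists_good_points d hdne (e n + 1)
    have hdenom : ∀ j, ∀ c ∈ φ.consts, (RatFunc.denom c).eval (α j) ≠ 0 := by
      intro j c hc
      refine ne_zero_of_dvd_ne_zero (hαgood j) (Polynomial.eval_dvd ?_)
      exact List.dvd_prod (List.mem_map_of_mem hc)
    have hσ : ∀ j : Fin (e n + 1), ∃ σ : Formula F, σ.size = φ.size ∧
        σ.eval = MvPolynomial.map (Polynomial.evalRingHom (α j))
          (Gfam F (f n) (e n) (ferr n)) :=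
      fun j => spec_eval F (α j) _ φ hφG (hdenom j)
    choose σ hσsize hσeval using hσ
    obtain ⟨lam, hlam⟩ := exists_interp α hαinj
    refine ⟨Formula.listSum (List.ofFn fun j : Fin (e n + 1) =>
      Formula.mul (Formula.const (lam j)) (σ j)), ?_, ?_⟩
    · refine le_trans (Formula.size_listSum _) ?_
      rw [List.map_ofFn, List.length_ofFn, List.sum_ofFn]
      have hbound : ∀ j : Fin (e n + 1),
          (Formula.mul (Formula.const (lam j)) (σ j)).size ≤ s n + 1 := by
        intro j
        simp only [Formula.size]
        rw [hσsize j]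
        omega
      calc (∑ j : Fin (e n + 1),
            ((Formula.size ∘ fun j => Formula.mul (Formula.const (lam j)) (σ j)) j))
            + (e n + 1)
          ≤ (∑ _j : Fin (e n + 1), (s n + 1)) + (e n + 1) := by
            gcongr with j
            exact hbound j
        _ = (e n + 1) * (s n + 2) := by
            rw [Finset.sum_const, Finset.card_univ, Fintype.card_fin, smul_eq_mul]
            ring
    · rw [Formula.eval_listSum, List.map_ofFn, List.sum_ofFn]
      have heval : ∀ j : Fin (e n + 1),
          (Formula.eval ∘ fun j => Formula.mul (Formula.const (lam j)) (σ j)) j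
            = C (lam j) * (f n + ∑ i ∈ Finset.range (e n), C (α j ^ (i + 1)) * ferr n i) := by
        intro j
        simp only [Function.comp, Formula.eval]
        rw [hσeval j, evalRingHom_Gfam]
      rw [Finset.sum_congr rfl fun j _ => heval j]
      exact interp_sum (f n) (ferr n) α lam hlam
  · rintro ⟨hf, s, hs, hforms⟩
    refine ⟨hf, fun _ => 0, ⟨0, fun n => by simp⟩, fun _ _ => 0, ?_⟩
    have hfun : (fun n => liftε F (f n) + ∑ i ∈ Finset.range 0,
        C ((RatFunc.X : RatFunc F) ^ (i + 1)) * liftε F 0)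
        = fun n => liftε F (f n) := by
      funext n; simp
    rw [hfun]
    obtain ⟨v, hv, hvars⟩ := hf
    refine ⟨⟨v, hv, fun n i hi =>
      hvars n i (MvPolynomial.vars_map (f n) (algebraMap F (RatFunc F)) hi)⟩,
      s, hs, fun n => ?_⟩
    obtain ⟨φ, hφsize, hφeval⟩ := hforms n
    refine ⟨φ.mapC (algebraMap F (RatFunc F)), ?_, ?_⟩
    · rw [Formula.size_mapC]; exact hφsize
    · rw [Formula.eval_mapC, hφeval]; rfl

end
end

section
/- Over any field F, the following strict inclusions hold: VP_1^weakest(F) ⊊ VP_1^weak(F) ⊊ VP_1^gen(F) ⊊ VP_2^weakest(F). -/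
open MvPolynomial

noncomputable section

namespace S16
variable {F : Type} [Field F]

lemma weakestC (c : F) : IsWeakestForm (C c : MvPolynomial ℕ F) := Or.inr ⟨c, rfl⟩
lemma weakestX (i : ℕ) : IsWeakestForm (X i : MvPolynomial ℕ F) := Or.inl ⟨i, rfl⟩
lemma weakest0 : IsWeakestForm (0 : MvPolynomial ℕ F) := Or.inr ⟨0, (map_zero C).symm⟩
lemma weakest1 : IsWeakestForm (1 : MvPolynomial ℕ F) := Or.inr ⟨1, (map_one C).symm⟩

lemma weakest_isWeak {p : MvPolynomial ℕ F} (h : IsWeakestForm p) : IsWeakForm p := by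
  rcases h with ⟨i, rfl⟩ | ⟨c, rfl⟩
  · exact ⟨1, 0, i, by simp⟩
  · exact ⟨0, c, 0, by simp⟩

lemma weak_isGen {p : MvPolynomial ℕ F} (h : IsWeakForm p) : IsGenForm p := by
  obtain ⟨α, β, i, rfl⟩ := h
  unfold IsGenForm
  refine le_trans (totalDegree_add _ _) ?_
  simp only [max_le_iff]
  constructor
  · refine le_trans (totalDegree_mul _ _) ?_
    simp [totalDegree_C, totalDegree_X]
  · simp [totalDegree_C]

lemma prod11 {R : Type*} [CommSemiring R] (L : List (Matrix (Fin 1) (Fin 1) R)) :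
    L.prod 0 0 = (L.map fun A => A 0 0).prod := by
  induction L with
  | nil => simp [Matrix.one_apply]
  | cons A L ih => simp [List.prod_cons, Matrix.mul_apply, Fin.sum_univ_one, ih]

lemma abp1_elim {form : MvPolynomial ℕ F → Prop} {s : ℕ} {p : MvPolynomial ℕ F}
    (h : ABPComputes form 1 s p) :
    ∃ (a b : F) (ℓ : Fin s → MvPolynomial ℕ F), (∀ i, form (ℓ i)) ∧
      p = C a * C b * (List.ofFn fun i => ℓ i).prod := by
  obtain ⟨v, w, M, hM, hp⟩ := h
  refine ⟨v 0, w 0, fun i => M i 0 0, fun i => hM i 0 0, ?_⟩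
  rw [hp]
  simp only [dotProduct, Matrix.mulVec, Fin.sum_univ_one]
  rw [show ((List.ofFn M).prod 0 0) = (List.ofFn fun i => M i 0 0).prod by
    rw [prod11, List.map_ofFn]; rfl]
  ring

lemma abp1_intro {form : MvPolynomial ℕ F → Prop} {q : MvPolynomial ℕ F} (hq : form q) :
    ABPComputes form 1 1 q := by
  refine ⟨fun _ => 1, fun _ => 1, fun _ => !![q], fun i a b => ?_, ?_⟩
  · fin_cases a <;> fin_cases b <;> simpa using hq
  · simp [dotProduct, Matrix.mulVec, Fin.sum_univ_one, List.ofFn_succ]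

-- product of weakest forms: either constant or vanishes at 0
lemma prod_weakest {L : List (MvPolynomial ℕ F)}
    (h : ∀ x ∈ L, (∃ i, x = X i) ∨ ∃ c, x = C c) :
    (∃ c, L.prod = C c) ∨ constantCoeff L.prod = 0 := by
  induction L with
  | nil => exact Or.inl ⟨1, (map_one C).symm⟩
  | cons a L ih =>
    rcases h a (List.mem_cons_self) with ⟨i, rfl⟩ | ⟨c, rfl⟩
    · right; simp [List.prod_cons]
    · rcases ih (fun x hx => h x (List.mem_cons_of_mem _ hx)) with ⟨d, hd⟩ | h0
      · exact Or.inl ⟨c * d, by simp [List.prod_cons, hd, map_mul]⟩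
      · right; simp [List.prod_cons, h0]

lemma not_weakest1 {s : ℕ} (h : ABPComputes IsWeakestForm 1 s ((X 0 + 1 : MvPolynomial ℕ F))) :
    False := by
  obtain ⟨a, b, ℓ, hℓ, hp⟩ := abp1_elim h
  set L : List (MvPolynomial ℕ F) := C a :: C b :: List.ofFn (fun i => ℓ i) with hLdef
  have hall : ∀ x ∈ L, (∃ i, x = X i) ∨ ∃ c, x = C c := by
    intro x hx
    rw [hLdef] at hx
    simp only [List.mem_cons, List.mem_ofFn] at hx
    rcases hx with rfl | rfl | ⟨i, rfl⟩
    · exact Or.inr ⟨a, rfl⟩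
    · exact Or.inr ⟨b, rfl⟩
    · exact hℓ i
  have hprod : (X 0 + 1 : MvPolynomial ℕ F) = L.prod := by
    rw [hLdef]; simp only [List.prod_cons]; rw [← mul_assoc, ← hp]
  rcases prod_weakest hall with ⟨c, hc⟩ | h0
  · rw [← hprod] at hc
    have e0 := congrArg (eval (fun _ => (0:F))) hc
    have e1 := congrArg (eval (fun _ => (1:F))) hc
    simp at e0 e1
    rw [← e0] at e1
    exact one_ne_zero (by linear_combination e1 : (1:F) = 0)
  · rw [← hprod] at h0
    simp at h0

-- weak: X 0 + X 1 cannot be a product of weak forms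
lemma not_weak1 {s : ℕ} (h : ABPComputes IsWeakForm 1 s ((X 0 + X 1 : MvPolynomial ℕ F))) :
    False := by
  obtain ⟨a, b, ℓ, hℓ, hp⟩ := abp1_elim h
  set L : List (MvPolynomial ℕ F) := C a :: C b :: List.ofFn (fun i => ℓ i) with hLdef
  have hall : ∀ x ∈ L, IsWeakForm x := by
    intro x hx
    rw [hLdef] at hx
    simp only [List.mem_cons, List.mem_ofFn] at hx
    rcases hx with rfl | rfl | ⟨i, rfl⟩
    · exact ⟨0, a, 0, by simp⟩
    · exact ⟨0, b, 0, by simp⟩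
    · exact hℓ i
  have hprod : (X 0 + X 1 : MvPolynomial ℕ F) = L.prod := by
    rw [hLdef]; simp only [List.prod_cons]; rw [← mul_assoc, ← hp]
  -- eval at 0 is 0, so some factor vanishes at 0
  have h0 : ((L.map (eval (fun _ => (0:F)))).prod) = 0 := by
    rw [← map_list_prod, ← hprod]; simp
  rw [List.prod_eq_zero_iff] at h0
  obtain ⟨x, hxL, hx0⟩ := List.mem_map.1 h0
  obtain ⟨α, β, i, rfl⟩ := hall x hxL
  have hβ : β = 0 := by simpa using hx0
  subst hβ
  have hdvd : (C α * X i + C 0 : MvPolynomial ℕ F) ∣ L.prod := List.dvd_prod hxL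
  obtain ⟨t, ht⟩ := hdvd
  rw [← hprod] at ht
  have e0 := congrArg (eval (fun j => if j = 0 then (1:F) else 0)) ht
  have e1 := congrArg (eval (fun j => if j = 1 then (1:F) else 0)) ht
  simp [map_mul] at e0 e1
  by_cases hi : i = 0
  · subst hi; simp at e1
  · simp [hi] at e0
variable {F : Type} [Field F]

lemma finsupp_deg_le_one {m : ℕ →₀ ℕ} (h : (m.sum fun _ e => e) ≤ 1) :
    m = 0 ∨ ∃ i, m = Finsupp.single i 1 := by
  by_cases hm : m = 0
  · exact Or.inl hm
  right
  obtain ⟨i, hi⟩ := Finsupp.support_nonempty_iff.2 hm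
  have hi' : m i ≠ 0 := Finsupp.mem_support_iff.1 hi
  have hle : m i ≤ m.sum fun _ e => e :=
    Finset.single_le_sum (fun j _ => Nat.zero_le _) hi
  have hmi : m i = 1 := by omega
  refine ⟨i, ?_⟩
  rw [Finsupp.eq_single_iff]
  refine ⟨?_, hmi⟩
  intro j hj
  simp only [Finset.mem_singleton]
  by_contra hji
  have hj' : m j ≠ 0 := Finsupp.mem_support_iff.1 hj
  have hsub : ({i, j} : Finset ℕ) ⊆ m.support := by
    intro x hx
    simp only [Finset.mem_insert, Finset.mem_singleton] at hx
    rcases hx with rfl | rfl <;> simpa [Finsupp.mem_support_iff]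
  have h2 : m i + m j ≤ m.sum fun _ e => e := by
    calc m i + m j = ∑ x ∈ ({i, j} : Finset ℕ), m x := by
          rw [Finset.sum_pair (fun hij => hji (hij.symm))]
      _ ≤ m.sum fun _ e => e := Finset.sum_le_sum_of_subset hsub
  omega

/-- The map `F[x₀,x₁,…] → F[y][x]`, `x₀ ↦ x`, `x₁ ↦ y`, rest `↦ 0`. -/
def ψ (F : Type) [Field F] : MvPolynomial ℕ F →+* Polynomial (Polynomial F) :=
  eval₂Hom ((Polynomial.C).comp (Polynomial.C))
    (fun i => if i = 0 then Polynomial.X else if i = 1 then Polynomial.C Polynomial.X else 0)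

lemma psi_affine {p : MvPolynomial ℕ F} (hp : p.totalDegree ≤ 1) :
    ∃ (a : F) (b : Polynomial F),
      ψ F p = Polynomial.C b + Polynomial.C (Polynomial.C a) * Polynomial.X := by
  have hsum : ψ F p = ∑ m ∈ p.support, ψ F (monomial m (coeff m p)) := by
    conv_lhs => rw [p.as_sum]
    rw [map_sum]
  rw [hsum]
  refine Finset.sum_induction _
    (fun q => ∃ a b, q = Polynomial.C b + Polynomial.C (Polynomial.C a) * Polynomial.X)
    ?_ ⟨0, 0, by simp⟩ ?_
  · rintro x y ⟨a, b, rfl⟩ ⟨a', b', rfl⟩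
    exact ⟨a + a', b + b', by push_cast [map_add]; ring⟩
  · intro m hm
    have hd : (m.sum fun _ e => e) ≤ 1 := le_trans (le_totalDegree hm) hp
    rcases finsupp_deg_le_one hd with rfl | ⟨i, rfl⟩
    · refine ⟨0, Polynomial.C (coeff 0 p), ?_⟩
      simp [ψ, eval₂Hom_monomial]
    · rw [show ψ F (monomial (Finsupp.single i 1) (coeff (Finsupp.single i 1) p)) =
          Polynomial.C (Polynomial.C (coeff (Finsupp.single i 1) p)) *
            ((if i = 0 then Polynomial.X else if i = 1 then Polynomial.C Polynomial.X else 0)) by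
        simp [ψ, eval₂Hom_monomial, Finsupp.prod_single_index]]
      by_cases h0 : i = 0
      · subst h0
        exact ⟨coeff (Finsupp.single 0 1) p, 0, by simp⟩
      · by_cases h1 : i = 1
        · subst h1
          refine ⟨0, Polynomial.C (coeff (Finsupp.single 1 1) p) * Polynomial.X, by
            norm_num [Polynomial.C_mul]⟩
        · exact ⟨0, 0, by simp [h0, h1]⟩

lemma not_gen1 {s : ℕ}
    (h : ABPComputes IsGenForm 1 s ((X 0 * X 1 + 1 : MvPolynomial ℕ F))) : False := by
  obtain ⟨a, b, ℓ, hℓ, hp⟩ := abp1_elim h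
  set L : List (MvPolynomial ℕ F) := C a :: C b :: List.ofFn (fun i => ℓ i) with hLdef
  have hall : ∀ x ∈ L, totalDegree x ≤ 1 := by
    intro x hx
    rw [hLdef] at hx
    simp only [List.mem_cons, List.mem_ofFn] at hx
    rcases hx with rfl | rfl | ⟨i, rfl⟩
    · simp [totalDegree_C]
    · simp [totalDegree_C]
    · exact hℓ i
  have hprod : (X 0 * X 1 + 1 : MvPolynomial ℕ F) = L.prod := by
    rw [hLdef]; simp only [List.prod_cons]; rw [← mul_assoc, ← hp]
  have hψp : ψ F (X 0 * X 1 + 1) = Polynomial.X * Polynomial.C Polynomial.X + 1 := by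
    simp [ψ]
  have hconst : Polynomial.constantCoeff (ψ F L.prod) = 1 := by
    rw [← hprod, hψp]; simp
  have hmem : ∀ x ∈ L, ψ F x ∈
      (Polynomial.mapRingHom (Polynomial.C : F →+* Polynomial F)).range := by
    intro x hx
    obtain ⟨α, β, hx'⟩ := psi_affine (hall x hx)
    have hβ : Polynomial.constantCoeff (ψ F x) = β := by rw [hx']; simp
    have hu : IsUnit β := by
      rw [← hβ]
      refine isUnit_of_dvd_one ?_
      rw [← hconst]
      exact map_dvd _ (map_dvd _ (List.dvd_prod hx))
    obtain ⟨u, _, hu'⟩ := Polynomial.isUnit_iff.1 hu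
    refine ⟨Polynomial.C u + Polynomial.C α * Polynomial.X, ?_⟩
    rw [hx', ← hu']
    simp [Polynomial.map_add, Polynomial.map_C, Polynomial.map_mul, Polynomial.map_X]
  have hrange : ψ F L.prod ∈
      (Polynomial.mapRingHom (Polynomial.C : F →+* Polynomial F)).range := by
    rw [map_list_prod]
    apply Subring.list_prod_mem
    intro q hq
    obtain ⟨x, hxL, rfl⟩ := List.mem_map.1 hq
    exact hmem x hxL
  obtain ⟨r, hr⟩ := hrange
  rw [← hprod, hψp] at hr
  have hc := congrArg (fun q => Polynomial.coeff q 1) hr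
  simp only [Polynomial.coe_mapRingHom, Polynomial.coeff_map, Polynomial.coeff_add,
    Polynomial.coeff_one] at hc
  rw [mul_comm, Polynomial.coeff_C_mul, Polynomial.coeff_X_one, mul_one] at hc
  norm_num at hc
  exact Polynomial.X_ne_C (r.coeff 1) hc.symm

lemma affine_decomp {p : MvPolynomial ℕ F} (hp : p.totalDegree ≤ 1) :
    ∃ (c : F) (a : ℕ →₀ F), p = C c + a.sum fun i α => C α * X i := by
  have hsum : p = ∑ m ∈ p.support, monomial m (coeff m p) := p.as_sum
  rw [hsum]
  refine Finset.sum_induction _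
    (fun q => ∃ (c : F) (a : ℕ →₀ F), q = C c + a.sum fun i α => C α * X i)
    ?_ ⟨0, 0, by simp⟩ ?_
  · rintro x y ⟨c, a, rfl⟩ ⟨c', a', rfl⟩
    refine ⟨c + c', a + a', ?_⟩
    rw [Finsupp.sum_add_index' (fun i => by simp) (fun i b₁ b₂ => by rw [map_add]; ring),
      map_add]
    ring
  · intro m hm
    have hd : (m.sum fun _ e => e) ≤ 1 := le_trans (le_totalDegree hm) hp
    rcases finsupp_deg_le_one hd with rfl | ⟨i, rfl⟩
    · exact ⟨coeff 0 p, 0, by simp [monomial_zero']⟩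
    · refine ⟨0, Finsupp.single i (coeff (Finsupp.single i 1) p), ?_⟩
      rw [Finsupp.sum_single_index (by simp), monomial_eq, map_zero, zero_add]
      congr 1
      simp

lemma aeval_fix {p : MvPolynomial ℕ F} {g : ℕ → MvPolynomial ℕ F}
    (h : ∀ i ∈ p.vars, g i = X i) : aeval g p = p := by
  conv_lhs => rw [p.as_sum]
  conv_rhs => rw [p.as_sum]
  rw [map_sum]
  refine Finset.sum_congr rfl fun m hm => ?_
  rw [aeval_monomial, monomial_eq, algebraMap_eq]
  congr 1
  exact Finsupp.prod_congr fun i hi => by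
    rw [h i (mem_vars i |>.2 ⟨m, hm, hi⟩)]

/-- All entries of a 2×2 matrix are weakest forms. -/
def WeakestMat (M : Matrix (Fin 2) (Fin 2) (MvPolynomial ℕ F)) : Prop :=
  ∀ a b, IsWeakestForm (M a b)

lemma weakestMat_mk {p q r s : MvPolynomial ℕ F} (h1 : IsWeakestForm p)
    (h2 : IsWeakestForm q) (h3 : IsWeakestForm r) (h4 : IsWeakestForm s) :
    WeakestMat !![p, q; r, s] := by
  intro a b
  fin_cases a <;> fin_cases b <;> simpa

lemma addList (t : Finset ℕ) (a : ℕ → F) :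
    ∃ L : List (Matrix (Fin 2) (Fin 2) (MvPolynomial ℕ F)),
      (∀ M ∈ L, WeakestMat M) ∧ L.length = 3 * t.card ∧
      L.prod = !![1, 0; (∑ i ∈ t, C (a i) * X i), 1] := by
  classical
  induction t using Finset.induction_on with
  | empty => exact ⟨[], by simp, by simp, by simp [Matrix.one_fin_two]⟩
  | @insert i t hi ih =>
    obtain ⟨L, hLw, hLl, hLp⟩ := ih
    by_cases h0 : a i = 0
    · refine ⟨!![1,0;0,1] :: !![1,0;0,1] :: !![1,0;0,1] :: L, ?_, ?_, ?_⟩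
      · intro M hM
        rcases List.mem_cons.1 hM with rfl | hM
        · exact weakestMat_mk weakest1 weakest0 weakest0 weakest1
        rcases List.mem_cons.1 hM with rfl | hM
        · exact weakestMat_mk weakest1 weakest0 weakest0 weakest1
        rcases List.mem_cons.1 hM with rfl | hM
        · exact weakestMat_mk weakest1 weakest0 weakest0 weakest1
        · exact hLw M hM
      · simp [hLl, Finset.card_insert_of_notMem hi]; ring
      · rw [List.prod_cons, List.prod_cons, List.prod_cons, hLp, ← Matrix.one_fin_two,
          one_mul, one_mul, one_mul, Finset.sum_insert hi, h0]
        norm_num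
    · refine ⟨!![1,0;0,C (a i)] :: !![1,0;X i,1] :: !![1,0;0,C (a i)⁻¹] :: L, ?_, ?_, ?_⟩
      · intro M hM
        rcases List.mem_cons.1 hM with rfl | hM
        · exact weakestMat_mk weakest1 weakest0 weakest0 (weakestC _)
        rcases List.mem_cons.1 hM with rfl | hM
        · exact weakestMat_mk weakest1 weakest0 (weakestX _) weakest1
        rcases List.mem_cons.1 hM with rfl | hM
        · exact weakestMat_mk weakest1 weakest0 weakest0 (weakestC _)
        · exact hLw M hM
      · simp [hLl, Finset.card_insert_of_notMem hi]; ring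
      · have hC : (C (a i) : MvPolynomial ℕ F) * C (a i)⁻¹ = 1 := by
          rw [← map_mul, mul_inv_cancel₀ h0, map_one]
        rw [List.prod_cons, List.prod_cons, List.prod_cons, hLp, Finset.sum_insert hi]
        rw [Matrix.mul_fin_two, Matrix.mul_fin_two, Matrix.mul_fin_two]
        refine Matrix.ext fun x y => ?_
        fin_cases x <;> fin_cases y <;> simp <;>
          first
            | linear_combination (∑ x ∈ t, C (a x) * X x) * hC
            | linear_combination hC

lemma blockList (N : ℕ) {q : MvPolynomial ℕ F}
    (hq : ∃ (c : F) (t : Finset ℕ) (a : ℕ → F), t ⊆ Finset.range N ∧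
      q = C c + ∑ i ∈ t, C (a i) * X i) :
    ∃ L : List (Matrix (Fin 2) (Fin 2) (MvPolynomial ℕ F)),
      (∀ M ∈ L, WeakestMat M) ∧ L.length ≤ 3 * N + 3 ∧ L.prod = !![q, 0; 0, 0] := by
  obtain ⟨c, t, a, htN, rfl⟩ := hq
  obtain ⟨L, hLw, hLl, hLp⟩ := addList t a
  refine ⟨!![0,1;0,0] :: !![1,0;C c,1] :: (L ++ [!![1,0;0,0]]), ?_, ?_, ?_⟩
  · intro M hM
    rcases List.mem_cons.1 hM with rfl | hM
    · exact weakestMat_mk weakest0 weakest1 weakest0 weakest0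
    rcases List.mem_cons.1 hM with rfl | hM
    · exact weakestMat_mk weakest1 weakest0 (weakestC _) weakest1
    rcases List.mem_append.1 hM with hM | hM
    · exact hLw M hM
    · rw [List.mem_singleton.1 hM]
      exact weakestMat_mk weakest1 weakest0 weakest0 weakest0
  · have hcard : t.card ≤ N := by
      simpa using Finset.card_le_card htN
    simp [hLl]
    omega
  · rw [List.prod_cons, List.prod_cons, List.prod_append, hLp,
      List.prod_singleton]
    rw [Matrix.mul_fin_two, Matrix.mul_fin_two, Matrix.mul_fin_two]
    refine Matrix.ext fun x y => ?_
    fin_cases x <;> fin_cases y <;> simp <;> ring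

lemma chainList (B : ℕ) (qs : List (MvPolynomial ℕ F))
    (h : ∀ q ∈ qs, ∃ L : List (Matrix (Fin 2) (Fin 2) (MvPolynomial ℕ F)),
      (∀ M ∈ L, WeakestMat M) ∧ L.length ≤ B ∧ L.prod = !![q, 0; 0, 0]) :
    ∃ L : List (Matrix (Fin 2) (Fin 2) (MvPolynomial ℕ F)),
      (∀ M ∈ L, WeakestMat M) ∧ L.length ≤ B * qs.length + 1 ∧
      L.prod = !![qs.prod, 0; 0, 0] := by
  induction qs with
  | nil =>
    refine ⟨[!![1,0;0,0]], ?_, by simp, by simp⟩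
    intro M hM
    rw [List.mem_singleton.1 hM]
    exact weakestMat_mk weakest1 weakest0 weakest0 weakest0
  | cons q qs ih =>
    obtain ⟨Lq, hLqw, hLql, hLqp⟩ := h q (List.mem_cons_self)
    obtain ⟨L, hLw, hLl, hLp⟩ := ih fun x hx => h x (List.mem_cons_of_mem _ hx)
    refine ⟨Lq ++ L, ?_, ?_, ?_⟩
    · intro M hM
      rcases List.mem_append.1 hM with hM | hM
      · exact hLqw M hM
      · exact hLw M hM
    · simp only [List.length_append, List.length_cons]
      calc Lq.length + L.length ≤ B + (B * qs.length + 1) := Nat.add_le_add hLql hLl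
        _ = B * (qs.length + 1) + 1 := by ring
    · rw [List.prod_append, hLqp, hLp, List.prod_cons, Matrix.mul_fin_two]
      refine Matrix.ext fun x y => ?_
      fin_cases x <;> fin_cases y <;> simp

variable {F : Type} [Field F]

lemma VPk_mono {k : ℕ} {f1 f2 : MvPolynomial ℕ F → Prop} (h : ∀ p, f1 p → f2 p) :
    VPkClass F k f1 ⊆ VPkClass F k f2 := by
  rintro f ⟨hf, s, hs, hc⟩
  refine ⟨hf, s, hs, fun n => ?_⟩
  obtain ⟨s', hs', v, w, M, hM, hp⟩ := hc n
  exact ⟨s', hs', v, w, M, fun i a b => h _ (hM i a b), hp⟩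

lemma pow_ge_self (m n c : ℕ) (h : m ≤ c) : m ≤ (n + 2) ^ c := by
  calc m ≤ 2 ^ m := Nat.le_of_lt Nat.lt_two_pow_self
    _ ≤ 2 ^ c := Nat.pow_le_pow_right (by norm_num) h
    _ ≤ (n + 2) ^ c := Nat.pow_le_pow_left (by omega) c

lemma gen_subset_w2 : VPkClass F 1 IsGenForm ⊆ VPkClass F 2 IsWeakestForm := by
  rintro f ⟨⟨vb, hvb, hv⟩, s, hs, hc⟩
  refine ⟨⟨vb, hvb, hv⟩, fun n => (3 * vb n + 3) * s n + 1, ?_, fun n => ?_⟩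
  · obtain ⟨c1, h1⟩ := hvb
    obtain ⟨c2, h2⟩ := hs
    refine ⟨c1 + c2 + 3, fun n => ?_⟩
    have hb1 := h1 n
    have hb2 := h2 n
    have hpow1 : 1 ≤ (n + 2) ^ c1 := Nat.one_le_pow _ _ (by omega)
    have hpow2 : 1 ≤ (n + 2) ^ c2 := Nat.one_le_pow _ _ (by omega)
    calc (3 * vb n + 3) * s n + 1
        ≤ (3 * (n+2)^c1 + 3 * (n+2)^c1) * (n+2)^c2 + 1 := by
          refine Nat.add_le_add_right (Nat.mul_le_mul ?_ hb2) 1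
          omega
      _ = 6 * ((n+2)^c1 * (n+2)^c2) + 1 := by ring
      _ ≤ 6 * ((n+2)^c1 * (n+2)^c2) + (n+2)^c1 * (n+2)^c2 := by
          exact Nat.add_le_add_left (by simpa using Nat.mul_le_mul hpow1 hpow2) _
      _ = 7 * ((n+2)^c1 * (n+2)^c2) := by ring
      _ ≤ (n+2)^3 * ((n+2)^c1 * (n+2)^c2) := by
          refine Nat.mul_le_mul_right _ ?_
          calc (7:ℕ) ≤ 2^3 := by norm_num
            _ ≤ (n+2)^3 := Nat.pow_le_pow_left (by omega) 3
      _ = (n + 2) ^ (c1 + c2 + 3) := by rw [pow_add, pow_add]; ring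
  · obtain ⟨s', hs', habp⟩ := hc n
    obtain ⟨a, b, ℓ, hℓ, hp⟩ := abp1_elim habp
    set N := vb n with hN
    set g : ℕ → MvPolynomial ℕ F := fun i => if i < N then X i else 0 with hg
    have hfix : aeval g (f n) = f n :=
      aeval_fix (fun i hi => by rw [hg]; exact if_pos (hv n i hi))
    have hfn : f n = C (a * b) * (List.ofFn fun i => aeval g (ℓ i)).prod := by
      conv_lhs => rw [← hfix, hp]
      rw [map_mul, map_mul, aeval_C, aeval_C, map_list_prod, List.map_ofFn]
      rw [map_mul, algebraMap_eq]
      rfl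
    have hforms : ∀ q ∈ (List.ofFn fun i => aeval g (ℓ i)),
        ∃ L : List (Matrix (Fin 2) (Fin 2) (MvPolynomial ℕ F)),
          (∀ M ∈ L, WeakestMat M) ∧ L.length ≤ 3 * N + 3 ∧ L.prod = !![q, 0; 0, 0] := by
      intro q hq
      obtain ⟨i, rfl⟩ := List.mem_ofFn.1 hq
      obtain ⟨c, α, hdec⟩ := affine_decomp (hℓ i)
      refine blockList N ⟨c, α.support.filter (· < N), fun j => α j, ?_, ?_⟩
      · intro j hj
        simp only [Finset.mem_filter] at hj
        exact Finset.mem_range.2 hj.2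
      · rw [hdec]
        rw [map_add, aeval_C, algebraMap_eq]
        congr 1
        rw [Finsupp.sum, map_sum, Finset.sum_filter]
        refine Finset.sum_congr rfl fun j hj => ?_
        rw [map_mul, aeval_C, aeval_X, algebraMap_eq]
        by_cases hjN : j < N
        · simp [hg, hjN]
        · simp [hg, hjN]
    obtain ⟨L, hLw, hLl, hLp⟩ := chainList (3 * N + 3) _ hforms
    refine ⟨L.length, ?_, ?_⟩
    · calc L.length ≤ (3 * N + 3) * (List.ofFn fun i => aeval g (ℓ i)).length + 1 := hLl
        _ = (3 * N + 3) * s' + 1 := by rw [List.length_ofFn]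
        _ ≤ (3 * vb n + 3) * s n + 1 := by
            refine Nat.add_le_add_right (Nat.mul_le_mul (le_refl _) hs') 1
    · refine ⟨![a * b, 0], ![1, 0], fun i => L.get i, ?_, ?_⟩
      · intro i x y
        exact hLw _ (L.get_mem i) x y
      · rw [List.ofFn_get, hLp, hfn]
        simp [dotProduct, Matrix.mulVec, Fin.sum_univ_two]

lemma const_mem {k : ℕ} {form : MvPolynomial ℕ F → Prop} {q : MvPolynomial ℕ F}
    {N s0 : ℕ} (hv : ∀ i ∈ q.vars, i < N) (h : ABPComputes form k s0 q) :
    (fun _ => q) ∈ VPkClass F k form := by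
  refine ⟨⟨fun _ => N, ⟨N, fun n => pow_ge_self N n N (le_refl N)⟩, fun n => hv⟩,
    fun _ => s0, ⟨s0, fun n => pow_ge_self s0 n s0 (le_refl s0)⟩,
    fun n => ⟨s0, le_refl _, h⟩⟩

lemma const_notin {k : ℕ} {form : MvPolynomial ℕ F → Prop} {q : MvPolynomial ℕ F}
    (h : ∀ s, ¬ ABPComputes form k s q) : (fun _ => q) ∉ VPkClass F k form := by
  rintro ⟨-, s, -, hc⟩
  obtain ⟨s', -, habp⟩ := hc 0
  exact h s' habp

lemma w1_mem : (fun _ => (X 0 + 1 : MvPolynomial ℕ F)) ∈ VPkClass F 1 IsWeakForm := by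
  refine const_mem (N := 1) ?_ (abp1_intro (q := X 0 + 1) ⟨1, 1, 0, by simp⟩)
  intro i hi
  have := vars_add_subset (X 0) (1 : MvPolynomial ℕ F) hi
  simp only [vars_X, vars_one, Finset.union_empty, Finset.mem_singleton] at this
  omega

lemma w2_mem : (fun _ => (X 0 + X 1 : MvPolynomial ℕ F)) ∈ VPkClass F 1 IsGenForm := by
  refine const_mem (N := 2) ?_ (abp1_intro (q := X 0 + X 1) ?_)
  · intro i hi
    have := vars_add_subset (X 0) (X 1 : MvPolynomial ℕ F) hi
    simp only [vars_X, Finset.mem_union, Finset.mem_singleton] at this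
    omega
  · unfold IsGenForm
    refine le_trans (totalDegree_add _ _) ?_
    simp [totalDegree_X]

lemma w3_abp : ABPComputes IsWeakestForm 2 2 ((X 0 * X 1 + 1 : MvPolynomial ℕ F)) := by
  refine ⟨![1, 0], ![1, 0], ![!![X 0, 1; 0, 0], !![X 1, 0; 1, 0]], ?_, ?_⟩
  · intro i a b
    fin_cases i
    · exact weakestMat_mk (weakestX _) weakest1 weakest0 weakest0 a b
    · exact weakestMat_mk (weakestX _) weakest0 weakest1 weakest0 a b
  · rw [show (List.ofFn ![!![(X 0 : MvPolynomial ℕ F), 1; 0, 0], !![X 1, 0; 1, 0]]) =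
      [!![(X 0 : MvPolynomial ℕ F), 1; 0, 0], !![X 1, 0; 1, 0]] by
        simp [List.ofFn_succ]]
    rw [List.prod_cons, List.prod_singleton, Matrix.mul_fin_two]
    simp [dotProduct, Matrix.mulVec, Fin.sum_univ_two]

lemma w3_mem : (fun _ => (X 0 * X 1 + 1 : MvPolynomial ℕ F)) ∈ VPkClass F 2 IsWeakestForm := by
  refine const_mem (N := 2) ?_ w3_abp
  intro i hi
  have h1 := vars_add_subset (X 0 * X 1) (1 : MvPolynomial ℕ F) hi
  simp only [vars_one, Finset.union_empty] at h1
  have h2 := vars_mul (X 0) (X 1 : MvPolynomial ℕ F) h1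
  simp only [vars_X, Finset.mem_union, Finset.mem_singleton] at h2
  omega

theorem statement16' (F : Type) [Field F] :
    VPkClass F 1 IsWeakestForm ⊂ VPkClass F 1 IsWeakForm ∧
    VPkClass F 1 IsWeakForm ⊂ VPkClass F 1 IsGenForm ∧
    VPkClass F 1 IsGenForm ⊂ VPkClass F 2 IsWeakestForm := by
  refine ⟨?_, ?_, ?_⟩
  · rw [Set.ssubset_def]
    refine ⟨VPk_mono (fun p => weakest_isWeak), fun hsub => ?_⟩
    exact const_notin (fun s h => not_weakest1 h) (hsub w1_mem)
  · rw [Set.ssubset_def]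
    refine ⟨VPk_mono (fun p => weak_isGen), fun hsub => ?_⟩
    exact const_notin (fun s h => not_weak1 h) (hsub w2_mem)
  · rw [Set.ssubset_def]
    refine ⟨gen_subset_w2, fun hsub => ?_⟩
    exact const_notin (fun s h => not_gen1 h) (hsub w3_mem)

end S16

/-- `VP_1^weakest ⊊ VP_1^weak ⊊ VP_1^gen ⊊ VP_2^weakest` over any field. -/
theorem statement16 (F : Type) [Field F] :
    VPkClass F 1 IsWeakestForm ⊂ VPkClass F 1 IsWeakForm ∧
    VPkClass F 1 IsWeakForm ⊂ VPkClass F 1 IsGenForm ∧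
    VPkClass F 1 IsGenForm ⊂ VPkClass F 2 IsWeakestForm := S16.statement16' F

end
end

section
/- For each label type * ∈ {weakest, weak, gen} and any field F, the class VP_1^*(F) is closed under approximation: VP_1^*(F) equals its approximation closure. That is, if f_n + ε f_{n;1} + … + ε^{e(n)} f_{n;e(n)} is computable, over F(ε), as a product of poly(n) many affine linear forms of type *, then f_n is computable over F as a product of poly(n) many affine linear forms of type *. -/
open MvPolynomial

noncomputable section

namespace S17
variable {F : Type} [Field F]

def ψ (F : Type) [Field F] : Polynomial (MvPolynomial ℕ F) →+* MvPolynomial ℕ (RatFunc F) :=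
  Polynomial.eval₂RingHom (liftε F) (MvPolynomial.C RatFunc.X)

@[simp] lemma ψ_C (a : MvPolynomial ℕ F) : ψ F (Polynomial.C a) = liftε F a :=
  Polynomial.eval₂_C _ _

@[simp] lemma ψ_X : ψ F (Polynomial.X) = MvPolynomial.C RatFunc.X :=
  Polynomial.eval₂_X _ _

lemma algFK (a : F) : algebraMap F (RatFunc F) a
    = algebraMap (Polynomial F) (RatFunc F) (Polynomial.C a) := by
  rw [RatFunc.algebraMap_apply]
  simp [Polynomial.algebraMap_eq]

lemma ψ_j (q : Polynomial F) :
    ψ F (q.map MvPolynomial.C)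
      = MvPolynomial.C (algebraMap (Polynomial F) (RatFunc F) q) := by
  have h : (ψ F).comp (Polynomial.mapRingHom MvPolynomial.C)
      = (MvPolynomial.C : RatFunc F →+* MvPolynomial ℕ (RatFunc F)).comp
          (algebraMap (Polynomial F) (RatFunc F)) := by
    apply Polynomial.ringHom_ext
    · intro a
      simp [liftε, algFK]
    · simp [RatFunc.algebraMap_X]
  exact RingHom.congr_fun h q

lemma coeff_ψ (b : Polynomial (MvPolynomial ℕ F)) (m : ℕ →₀ ℕ) :
    MvPolynomial.coeff m (ψ F b)
      = algebraMap (Polynomial F) (RatFunc F)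
          (∑ j ∈ b.support, Polynomial.C ((b.coeff j).coeff m) * Polynomial.X ^ j) := by
  have hψ : ψ F b = ∑ j ∈ b.support,
      liftε F (b.coeff j) * MvPolynomial.C (RatFunc.X ^ j) := by
    rw [ψ, Polynomial.coe_eval₂RingHom, Polynomial.eval₂_eq_sum, Polynomial.sum]
    simp [map_pow]
  rw [hψ, map_sum, MvPolynomial.coeff_sum]
  refine Finset.sum_congr rfl fun j _ => ?_
  rw [mul_comm, MvPolynomial.coeff_C_mul, liftε, MvPolynomial.coeff_map, map_mul, map_pow,
    RatFunc.algebraMap_X, ← algFK, mul_comm]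

lemma ψ_injective : Function.Injective (ψ F) := by
  have hker : ∀ b : Polynomial (MvPolynomial ℕ F), ψ F b = 0 → b = 0 := by
    intro b hb
    have hc : ∀ (j : ℕ) (m : ℕ →₀ ℕ), j ∈ b.support → (b.coeff j).coeff m = 0 := by
      intro j m hj
      have h0 := coeff_ψ b m
      rw [hb] at h0
      have h1 : (∑ j ∈ b.support, Polynomial.C ((b.coeff j).coeff m) * Polynomial.X ^ j) = 0 :=
        RatFunc.algebraMap_injective F (by rw [← h0]; simp)
      have h2 := congrArg (fun p => Polynomial.coeff p j) h1
      simpa [Polynomial.finset_sum_coeff, Polynomial.coeff_X_pow,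
        Finset.sum_ite_eq' b.support, hj] using h2
    ext j m
    by_cases hj : j ∈ b.support
    · simpa using hc j m hj
    · simp [Polynomial.notMem_support_iff.mp hj]
  intro x y hxy
  have := hker (x - y) (by rw [map_sub, hxy, sub_self])
  exact sub_eq_zero.mp this


lemma alg_denom_mul (x : RatFunc F) :
    x * algebraMap (Polynomial F) (RatFunc F) x.denom
      = algebraMap (Polynomial F) (RatFunc F) x.num := by
  have h := RatFunc.num_div_denom x
  set nm := x.num
  set dn := x.denom with hdn
  have hdn0 : algebraMap (Polynomial F) (RatFunc F) dn ≠ 0 :=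
    RatFunc.algebraMap_ne_zero (x.denom_ne_zero)
  rw [← h]
  exact div_mul_cancel₀ _ hdn0


/-- denominator clearing -/
lemma exists_clear (ℓ : MvPolynomial ℕ (RatFunc F)) :
    ∃ (q : Polynomial F) (b : Polynomial (MvPolynomial ℕ F)), q ≠ 0 ∧
      MvPolynomial.C (algebraMap (Polynomial F) (RatFunc F) q) * ℓ = ψ F b ∧
      ∀ t, b.coeff t = ∑ m ∈ ℓ.support,
        MvPolynomial.monomial m
          (((q / (ℓ.coeff m).denom) * (ℓ.coeff m).num).coeff t) := by
  classical
  set q : Polynomial F := ∏ m ∈ ℓ.support, (ℓ.coeff m).denom with hq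
  have hq0 : q ≠ 0 := Finset.prod_ne_zero_iff.mpr fun m _ => (ℓ.coeff m).denom_ne_zero
  set pm : (ℕ →₀ ℕ) → Polynomial F :=
    fun m => (q / (ℓ.coeff m).denom) * (ℓ.coeff m).num with hpm
  set b : Polynomial (MvPolynomial ℕ F) :=
    ∑ m ∈ ℓ.support, Polynomial.C (MvPolynomial.monomial m (1 : F)) * (pm m).map MvPolynomial.C
    with hb
  refine ⟨q, b, hq0, ?_, ?_⟩
  · have key : ∀ m ∈ ℓ.support,
        algebraMap (Polynomial F) (RatFunc F) (pm m)
          = algebraMap (Polynomial F) (RatFunc F) q * ℓ.coeff m := by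
      intro m hm
      have hdvd : (ℓ.coeff m).denom ∣ q := Finset.dvd_prod_of_mem _ hm
      have hdm : (ℓ.coeff m).denom * (q / (ℓ.coeff m).denom) = q :=
        EuclideanDomain.mul_div_cancel' (ℓ.coeff m).denom_ne_zero hdvd
      rw [hpm]
      simp only [map_mul]
      rw [← alg_denom_mul (ℓ.coeff m), mul_left_comm, ← map_mul,
        mul_comm (q / (ℓ.coeff m).denom), hdm, mul_comm]
    rw [hb, map_sum]
    have : ∀ m ∈ ℓ.support,
        ψ F (Polynomial.C (MvPolynomial.monomial m (1 : F)) * (pm m).map MvPolynomial.C)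
          = MvPolynomial.C (algebraMap (Polynomial F) (RatFunc F) q)
              * MvPolynomial.monomial m (ℓ.coeff m) := by
      intro m hm
      rw [map_mul, ψ_C, ψ_j, key m hm]
      rw [liftε]
      show (MvPolynomial.map (algebraMap F (RatFunc F))) (monomial m 1) * _ = _
      rw [MvPolynomial.map_monomial, map_one, mul_comm, MvPolynomial.C_mul_monomial,
        mul_one, MvPolynomial.C_mul_monomial, ← MvPolynomial.C_mul_monomial, mul_comm]
    rw [Finset.sum_congr rfl this, ← Finset.mul_sum, MvPolynomial.support_sum_monomial_coeff]
  · intro t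
    rw [hb, Polynomial.finset_sum_coeff]
    refine Finset.sum_congr rfl fun m _ => ?_
    rw [Polynomial.coeff_C_mul, Polynomial.coeff_map, mul_comm, MvPolynomial.C_mul_monomial,
      mul_one]


lemma descend_gen (ℓ : MvPolynomial ℕ (RatFunc F)) (h : IsGenForm ℓ) :
    ∃ (q : Polynomial F) (b : Polynomial (MvPolynomial ℕ F)), q ≠ 0 ∧
      MvPolynomial.C (algebraMap (Polynomial F) (RatFunc F) q) * ℓ = ψ F b ∧
      ∀ t, IsGenForm (b.coeff t) := by
  obtain ⟨q, b, hq, he, hc⟩ := exists_clear ℓ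
  refine ⟨q, b, hq, he, fun t => ?_⟩
  rw [IsGenForm, hc t]
  apply totalDegree_finsetSum_le
  intro m hm
  exact le_trans (totalDegree_monomial_le _ _) (le_trans (le_totalDegree hm) h)

lemma descend_weak (ℓ : MvPolynomial ℕ (RatFunc F)) (h : IsWeakForm ℓ) :
    ∃ (q : Polynomial F) (b : Polynomial (MvPolynomial ℕ F)), q ≠ 0 ∧
      MvPolynomial.C (algebraMap (Polynomial F) (RatFunc F) q) * ℓ = ψ F b ∧
      ∀ t, IsWeakForm (b.coeff t) := by
  classical
  obtain ⟨α, β, i, hℓ⟩ := h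
  obtain ⟨q, b, hq, he, hc⟩ := exists_clear ℓ
  have hmono : MvPolynomial.C α * MvPolynomial.X i
      = MvPolynomial.monomial (Finsupp.single i 1) α := by
    rw [MvPolynomial.X, MvPolynomial.C_mul_monomial, mul_one]
  have hsub : ℓ.support ⊆ {0, Finsupp.single i 1} := by
    intro m hm
    rw [hℓ] at hm
    rcases Finset.mem_union.mp (MvPolynomial.support_add hm) with h1 | h1
    · rw [hmono] at h1
      have := MvPolynomial.support_monomial_subset h1
      simp only [Finset.mem_singleton] at this
      simp [this]
    · rw [MvPolynomial.C_apply] at h1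
      have := MvPolynomial.support_monomial_subset h1
      simp only [Finset.mem_singleton] at this
      simp [this]
  refine ⟨q, b, hq, he, fun t => ?_⟩
  rw [hc t]
  rw [Finset.sum_subset hsub ?hz]
  case hz =>
    intro m _ hm
    have h0 : MvPolynomial.coeff m ℓ = 0 := MvPolynomial.notMem_support_iff.mp hm
    rw [h0]
    simp [RatFunc.num_zero]
  have hne : (0 : ℕ →₀ ℕ) ≠ Finsupp.single i 1 := by
    intro h0
    exact one_ne_zero (by simpa using congrFun (congrArg (↑·) h0.symm) i : (1 : ℕ) = 0)
  rw [Finset.sum_pair hne]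
  exact ⟨_, _, i, by
    rw [MvPolynomial.X, MvPolynomial.C_mul_monomial, mul_one, MvPolynomial.C_apply, add_comm]⟩

lemma descend_weakest (ℓ : MvPolynomial ℕ (RatFunc F)) (h : IsWeakestForm ℓ) :
    ∃ (q : Polynomial F) (b : Polynomial (MvPolynomial ℕ F)), q ≠ 0 ∧
      MvPolynomial.C (algebraMap (Polynomial F) (RatFunc F) q) * ℓ = ψ F b ∧
      ∀ t, IsWeakestForm (b.coeff t) := by
  rcases h with ⟨i, rfl⟩ | ⟨c, rfl⟩
  · refine ⟨1, Polynomial.C (MvPolynomial.X i), one_ne_zero, ?_, ?_⟩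
    · simp [liftε]
    · intro t
      rw [Polynomial.coeff_C]
      split
      · exact Or.inl ⟨i, rfl⟩
      · exact Or.inr ⟨0, (MvPolynomial.C_0).symm⟩
  · refine ⟨c.denom, (c.num).map MvPolynomial.C, c.denom_ne_zero, ?_, ?_⟩
    · rw [ψ_j, ← map_mul, mul_comm, alg_denom_mul]
    · intro t
      rw [Polynomial.coeff_map]
      exact Or.inr ⟨_, rfl⟩

lemma lift_weakest (p : MvPolynomial ℕ F) (h : IsWeakestForm p) :
    IsWeakestForm (liftε F p) := by
  rcases h with ⟨i, rfl⟩ | ⟨c, rfl⟩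
  · exact Or.inl ⟨i, by simp [liftε]⟩
  · exact Or.inr ⟨algebraMap F (RatFunc F) c, by simp [liftε]⟩

lemma lift_weak (p : MvPolynomial ℕ F) (h : IsWeakForm p) : IsWeakForm (liftε F p) := by
  obtain ⟨α, β, i, rfl⟩ := h
  exact ⟨algebraMap F (RatFunc F) α, algebraMap F (RatFunc F) β, i, by simp [liftε]⟩

lemma lift_gen (p : MvPolynomial ℕ F) (h : IsGenForm p) : IsGenForm (liftε F p) := by
  refine le_trans ?_ h
  exact Finset.sup_mono (MvPolynomial.support_map_subset _ _)

lemma prod_entry {R : Type} [CommSemiring R] (l : List (Matrix (Fin 1) (Fin 1) R)) :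
    l.prod 0 0 = (l.map (fun m => m 0 0)).prod := by
  induction l with
  | nil => simp [Matrix.one_apply]
  | cons a l ih => rw [List.prod_cons, Matrix.mul_apply, List.map_cons, List.prod_cons, ← ih]
                   simp

lemma abp1_iff {R : Type} [CommSemiring R] (form : MvPolynomial ℕ R → Prop) (s : ℕ)
    (p : MvPolynomial ℕ R) :
    ABPComputes form 1 s p ↔
      ∃ (c : R) (g : Fin s → MvPolynomial ℕ R),
        (∀ i, form (g i)) ∧ p = MvPolynomial.C c * ∏ i, g i := by
  constructor
  · rintro ⟨v, w, M, hM, hp⟩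
    refine ⟨v 0 * w 0, fun i => M i 0 0, fun i => hM i 0 0, ?_⟩
    rw [hp]
    rw [dotProduct, Fin.sum_univ_one, Matrix.mulVec, dotProduct,
      Fin.sum_univ_one, prod_entry, List.map_ofFn]
    rw [show ((fun m : Matrix (Fin 1) (Fin 1) (MvPolynomial ℕ R) => m 0 0) ∘ M)
      = fun i => M i 0 0 from rfl]
    rw [List.prod_ofFn, map_mul]
    ring
  · rintro ⟨c, g, hg, hp⟩
    refine ⟨fun _ => c, fun _ => 1, fun i => Matrix.of fun _ _ => g i,
      fun i a b => hg i, ?_⟩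
    rw [hp]
    rw [dotProduct, Fin.sum_univ_one, Matrix.mulVec, dotProduct,
      Fin.sum_univ_one, prod_entry, List.map_ofFn]
    rw [show ((fun m : Matrix (Fin 1) (Fin 1) (MvPolynomial ℕ R) => m 0 0)
      ∘ fun i => Matrix.of fun _ _ => g i) = fun i => g i from rfl]
    rw [List.prod_ofFn, map_one]
    ring

/-- trailing coefficient as a monoid hom, over a domain -/
def tcHom (R : Type*) [CommRing R] [IsDomain R] : Polynomial R →* R where
  toFun := Polynomial.trailingCoeff
  map_one' := by
    rw [Polynomial.trailingCoeff, Polynomial.natTrailingDegree_one, Polynomial.coeff_one_zero]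
  map_mul' := Polynomial.trailingCoeff_mul

lemma tc_map_C {F : Type} [Field F] (q : Polynomial F) :
    (q.map (MvPolynomial.C : F →+* MvPolynomial ℕ F)).trailingCoeff
      = MvPolynomial.C q.trailingCoeff := by
  by_cases hq : q = 0
  · simp [hq]
  have hinj : Function.Injective (MvPolynomial.C : F →+* MvPolynomial ℕ F) :=
    MvPolynomial.C_injective ℕ F
  have hntd : (q.map (MvPolynomial.C : F →+* MvPolynomial ℕ F)).natTrailingDegree
      = q.natTrailingDegree := by
    apply le_antisymm
    · apply Polynomial.natTrailingDegree_le_of_ne_zero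
      rw [Polynomial.coeff_map]
      intro h0
      exact Polynomial.trailingCoeff_nonzero_iff_nonzero.mpr hq
        (hinj (by rw [Polynomial.trailingCoeff, h0, map_zero]))
    · refine Polynomial.le_natTrailingDegree (by simpa using hq) fun m hm => ?_
      rw [Polynomial.coeff_map, Polynomial.coeff_eq_zero_of_lt_natTrailingDegree hm, map_zero]
  rw [Polynomial.trailingCoeff, hntd, Polynomial.coeff_map, Polynomial.trailingCoeff]


lemma closure_eq (form_F : MvPolynomial ℕ F → Prop)
    (form_K : MvPolynomial ℕ (RatFunc F) → Prop)
    (hlift : ∀ p, form_F p → form_K (liftε F p))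
    (hdesc : ∀ ℓ, form_K ℓ → ∃ (q : Polynomial F) (b : Polynomial (MvPolynomial ℕ F)),
      q ≠ 0 ∧ MvPolynomial.C (algebraMap (Polynomial F) (RatFunc F) q) * ℓ = ψ F b ∧
      ∀ t, form_F (b.coeff t)) :
    VPkClass F 1 form_F = ApproxClosure F (VPkClass (RatFunc F) 1 form_K) := by
  apply Set.eq_of_subset_of_subset
  · -- forward
    rintro f ⟨hfam, s, hs, habp⟩
    refine ⟨hfam, fun _ => 0, fun _ _ => 0, ?_⟩
    have hfun : (fun n => liftε F (f n) + ∑ i ∈ Finset.range 0,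
        MvPolynomial.C ((RatFunc.X : RatFunc F) ^ (i + 1)) * liftε F 0)
        = fun n => liftε F (f n) := by
      funext n; simp
    rw [hfun]
    obtain ⟨v, hv, hvars⟩ := hfam
    refine ⟨⟨v, hv, fun n i hi => hvars n i ?_⟩, s, hs, fun n => ?_⟩
    · have hsub := MvPolynomial.vars_map (p := f n) (algebraMap F (RatFunc F))
      exact hsub hi
    obtain ⟨s', hs', hABP⟩ := habp n
    refine ⟨s', hs', ?_⟩
    rw [abp1_iff] at hABP ⊢
    obtain ⟨c, g, hg, hp⟩ := hABP
    refine ⟨algebraMap F (RatFunc F) c, fun i => liftε F (g i), fun i => hlift _ (hg i), ?_⟩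
    show liftε F (f n) = MvPolynomial.C (algebraMap F (RatFunc F) c) * ∏ i, liftε F (g i)
    rw [hp, map_mul, map_prod]
    congr 1
    simp [liftε]
  · -- backward
    rintro f ⟨hfam, e, ferr, hmem⟩
    obtain ⟨-, s, hs, habp⟩ := hmem
    refine ⟨hfam, s, hs, fun n => ?_⟩
    obtain ⟨s', hs', hABP⟩ := habp n
    by_cases hf0 : f n = 0
    · refine ⟨0, Nat.zero_le _, ?_⟩
      rw [hf0]
      refine ⟨fun _ => 0, fun _ => 0, fun i => i.elim0, fun i => i.elim0, ?_⟩
      simp [dotProduct]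
    refine ⟨s', hs', ?_⟩
    rw [abp1_iff] at hABP ⊢
    obtain ⟨c, ℓs, hforms, hEq⟩ := hABP
    simp only at hEq
    choose q b hq hψb hform using fun i => hdesc (ℓs i) (hforms i)
    set algPK := algebraMap (Polynomial F) (RatFunc F) with halgPK
    set G : Polynomial (MvPolynomial ℕ F) :=
      Polynomial.C (f n) + ∑ i ∈ Finset.range (e n),
        Polynomial.X ^ (i + 1) * Polynomial.C (ferr n i) with hG
    have hψG : ψ F G = liftε F (f n) + ∑ i ∈ Finset.range (e n),
        MvPolynomial.C ((RatFunc.X : RatFunc F) ^ (i + 1)) * liftε F (ferr n i) := by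
      rw [hG, map_add, map_sum, ψ_C]
      congr 1
      refine Finset.sum_congr rfl fun i _ => ?_
      rw [map_mul, map_pow, ψ_X, ψ_C, ← map_pow]
    have hmain : ψ F (((c.denom * ∏ i, q i).map MvPolynomial.C) * G)
        = ψ F ((c.num.map MvPolynomial.C) * ∏ i, b i) := by
      have hL : ψ F (((c.denom * ∏ i, q i).map MvPolynomial.C) * G)
          = (MvPolynomial.C (algPK c.denom) * MvPolynomial.C c)
            * ((∏ i, MvPolynomial.C (algPK (q i))) * ∏ i, ℓs i) := by
        rw [map_mul, ψ_j, hψG, hEq, map_mul, map_prod, map_mul, map_prod]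
        ring
      have hR : ψ F ((c.num.map MvPolynomial.C) * ∏ i, b i)
          = (MvPolynomial.C (algPK c.denom) * MvPolynomial.C c)
            * ((∏ i, MvPolynomial.C (algPK (q i))) * ∏ i, ℓs i) := by
        rw [map_mul, ψ_j, map_prod]
        have h1 : ∏ i, ψ F (b i) = ∏ i, (MvPolynomial.C (algPK (q i)) * ℓs i) :=
          Finset.prod_congr rfl fun i _ => (hψb i).symm
        have h2 : (MvPolynomial.C (algPK c.num) : MvPolynomial ℕ (RatFunc F))
            = MvPolynomial.C (algPK c.denom) * MvPolynomial.C c := by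
          rw [← map_mul, mul_comm, alg_denom_mul]
        rw [h1, h2, Finset.prod_mul_distrib]
        try ring
      rw [hL, hR]
    have hBeq := ψ_injective hmain
    have htc := congrArg Polynomial.trailingCoeff hBeq
    rw [Polynomial.trailingCoeff_mul, Polynomial.trailingCoeff_mul, tc_map_C, tc_map_C] at htc
    have hprod : (∏ i, b i).trailingCoeff = ∏ i, (b i).trailingCoeff :=
      map_prod (tcHom (MvPolynomial ℕ F)) b Finset.univ
    have hGtc : G.trailingCoeff = f n := by
      have hc0 : G.coeff 0 = f n := by
        rw [hG, Polynomial.coeff_add, Polynomial.coeff_C_zero, Polynomial.finset_sum_coeff]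
        have hz : ∀ i ∈ Finset.range (e n),
            (Polynomial.X ^ (i + 1) * Polynomial.C (ferr n i)).coeff 0 = 0 := by
          intro i _
          rw [Polynomial.mul_coeff_zero, Polynomial.coeff_X_pow]
          simp
        rw [Finset.sum_congr rfl hz]
        simp
      have hntd : G.natTrailingDegree = 0 :=
        Polynomial.natTrailingDegree_eq_zero.mpr (Or.inr (by rw [hc0]; exact hf0))
      rw [Polynomial.trailingCoeff, hntd, hc0]
    rw [hGtc, hprod] at htc
    set α := (c.denom * ∏ i, q i).trailingCoeff with hα
    have hα0 : α ≠ 0 := by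
      rw [hα]
      exact Polynomial.trailingCoeff_nonzero_iff_nonzero.mpr
        (mul_ne_zero c.denom_ne_zero (Finset.prod_ne_zero_iff.mpr fun i _ => hq i))
    refine ⟨α⁻¹ * c.num.trailingCoeff, fun i => (b i).trailingCoeff,
      fun i => hform i _, ?_⟩
    calc f n = (MvPolynomial.C α⁻¹ * MvPolynomial.C α) * f n := by
          rw [← map_mul, inv_mul_cancel₀ hα0, map_one, one_mul]
      _ = MvPolynomial.C α⁻¹ * (MvPolynomial.C α * f n) := by ring
      _ = MvPolynomial.C α⁻¹ * (MvPolynomial.C c.num.trailingCoeff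
            * ∏ i, (b i).trailingCoeff) := by rw [htc]
      _ = MvPolynomial.C (α⁻¹ * c.num.trailingCoeff) * ∏ i, (b i).trailingCoeff := by
          rw [map_mul]; ring


end S17

/-- for each label type `* ∈ {weakest, weak, gen}`, `VP_1^*` equals its
approximation closure. -/
theorem statement17 (F : Type) [Field F] :
    VPkClass F 1 IsWeakestForm =
      ApproxClosure F (VPkClass (RatFunc F) 1 IsWeakestForm) ∧
    VPkClass F 1 IsWeakForm = ApproxClosure F (VPkClass (RatFunc F) 1 IsWeakForm) ∧
    VPkClass F 1 IsGenForm = ApproxClosure F (VPkClass (RatFunc F) 1 IsGenForm) :=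
  ⟨S17.closure_eq _ _ S17.lift_weakest S17.descend_weakest,
   S17.closure_eq _ _ S17.lift_weak S17.descend_weak,
   S17.closure_eq _ _ S17.lift_gen S17.descend_gen⟩

end
end
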